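/- arXiv:2412.06114 — 5 statements merged into one kernel-verified Lean document; each statement's English description precedes it below -/
import Mathlib

section
/- If Λ₀(t) + Λ⋆(t) → ∞ as t → ∞ and, for every s ≥ 0, Λ₁(t,s) → ∞ as t → ∞, then the counterfactual cumulative incidence function is proper: lim_{t→∞} F(t) = 1. -/
open MeasureTheory ProbabilityTheory Filter Set

/-- Cumulative hazard `Λ(t) = ∫₀ᵗ λ(u) du`. -/
noncomputable def cumHaz (lam : ℝ → ℝ) (t : ℝ) : ℝ := ∫ u in (0:ℝ)..t, lam u

/-- Post-intermediate cumulative hazard `Λ₁(t,s) = ∫ₛᵗ λ₁(u,s) du`. -/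
noncomputable def cumHaz1 (lam1 : ℝ → ℝ → ℝ) (t s : ℝ) : ℝ := ∫ u in s..t, lam1 u s

/-- The counterfactual cumulative incidence function
`F(t) = ∫₀ᵗ e^{−Λ₀(s)−Λ⋆(s)} λ₀(s) ds + ∫₀ᵗ e^{−Λ₀(s)−Λ⋆(s)} λ⋆(s) (1 − e^{−Λ₁(t,s)}) ds`. -/
noncomputable def cif (lamS lam0 : ℝ → ℝ) (lam1 : ℝ → ℝ → ℝ) (t : ℝ) : ℝ :=
  (∫ s in (0:ℝ)..t, Real.exp (-cumHaz lam0 s - cumHaz lamS s) * lam0 s) +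
  ∫ s in (0:ℝ)..t, Real.exp (-cumHaz lam0 s - cumHaz lamS s) * lamS s *
    (1 - Real.exp (-cumHaz1 lam1 t s))

/-- FTC: `∫₀ᵗ e^{-G(s)} g(s) ds = 1 - e^{-G(t)}` where `G` is the primitive of
a continuous `g`. -/
lemma ftc_exp (g : ℝ → ℝ) (hg : Continuous g) (t : ℝ) :
    ∫ s in (0:ℝ)..t, Real.exp (-(∫ u in (0:ℝ)..s, g u)) * g s
      = 1 - Real.exp (-(∫ u in (0:ℝ)..t, g u)) := by
  set G : ℝ → ℝ := fun x => ∫ u in (0:ℝ)..x, g u with hGdef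
  have hGcont : Continuous G :=
    intervalIntegral.continuous_primitive (fun a b => hg.intervalIntegrable a b) 0
  have hder : ∀ s : ℝ, HasDerivAt (fun x => -Real.exp (-G x)) (Real.exp (-G s) * g s) s := by
    intro s
    have hG : HasDerivAt G (g s) s :=
      intervalIntegral.integral_hasDerivAt_right (hg.intervalIntegrable _ _)
        (hg.stronglyMeasurableAtFilter _ _) hg.continuousAt
    have h2 : HasDerivAt (fun x => -Real.exp (-G x)) (-(Real.exp (-G s) * -g s)) s :=
      (hG.neg.exp).neg
    convert h2 using 1
    ring
  have hint : IntervalIntegrable (fun s => Real.exp (-G s) * g s) MeasureTheory.volume 0 t :=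
    ((Real.continuous_exp.comp hGcont.neg).mul hg).intervalIntegrable _ _
  have heq := intervalIntegral.integral_eq_sub_of_hasDerivAt
    (f := fun x => -Real.exp (-G x)) (f' := fun s => Real.exp (-G s) * g s)
    (fun s _ => hder s) hint
  rw [heq]
  simp only [hGdef, intervalIntegral.integral_same, neg_zero, Real.exp_zero]
  ring

/-- if `Λ₀(t)+Λ⋆(t) → ∞` and `Λ₁(t,s) → ∞` for every `s ≥ 0`,
then `F(t) → 1` as `t → ∞`. -/
theorem cif_tendsto_one (lamS lam0 : ℝ → ℝ) (lam1 : ℝ → ℝ → ℝ)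
    (hScont : ContinuousOn lamS (Set.Ici 0))
    (h0cont : ContinuousOn lam0 (Set.Ici 0))
    (h1cont : ContinuousOn (fun p : ℝ × ℝ => lam1 p.1 p.2) {p : ℝ × ℝ | 0 ≤ p.2 ∧ p.2 ≤ p.1})
    (hSnn : ∀ t ∈ Set.Ici (0:ℝ), 0 ≤ lamS t)
    (h0nn : ∀ t ∈ Set.Ici (0:ℝ), 0 ≤ lam0 t)
    (h1nn : ∀ s t : ℝ, 0 ≤ s → s ≤ t → 0 ≤ lam1 t s)
    (hsum : Tendsto (fun t => cumHaz lam0 t + cumHaz lamS t) atTop atTop)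
    (h1top : ∀ s : ℝ, 0 ≤ s → Tendsto (fun t => cumHaz1 lam1 t s) atTop atTop) :
    Tendsto (cif lamS lam0 lam1) atTop (nhds 1) := by
  classical
  -- extended (globally continuous) hazards
  set lamS' : ℝ → ℝ := fun u => lamS (max u 0) with hlamS'
  set lam0' : ℝ → ℝ := fun u => lam0 (max u 0) with hlam0'
  set lam1' : ℝ → ℝ → ℝ := fun u s => lam1 (max u (max s 0)) (max s 0) with hlam1'
  have hS' : Continuous lamS' :=
    hScont.comp_continuous (continuous_id.max continuous_const) (fun u => Set.mem_Ici.mpr (le_max_right _ _))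
  have h0' : Continuous lam0' :=
    h0cont.comp_continuous (continuous_id.max continuous_const) (fun u => Set.mem_Ici.mpr (le_max_right _ _))
  have h1' : Continuous fun p : ℝ × ℝ => lam1' p.1 p.2 := by
    have : Continuous fun p : ℝ × ℝ => ((max p.1 (max p.2 0), max p.2 0) : ℝ × ℝ) :=
      (continuous_fst.max (continuous_snd.max continuous_const)).prodMk
        (continuous_snd.max continuous_const)
    exact h1cont.comp_continuous this
      (fun p => ⟨le_max_right _ _, le_max_right _ _⟩)
  have hS'nn : ∀ u, 0 ≤ lamS' u := fun u => hSnn _ (Set.mem_Ici.mpr (le_max_right _ _))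
  have h0'nn : ∀ u, 0 ≤ lam0' u := fun u => h0nn _ (Set.mem_Ici.mpr (le_max_right _ _))
  have h1'nn : ∀ u s, 0 ≤ lam1' u s := fun u s =>
    h1nn _ _ (le_max_right _ _) (le_max_right _ _)
  -- primitives
  set G0 : ℝ → ℝ := fun x => ∫ u in (0:ℝ)..x, lam0' u with hG0
  set GS : ℝ → ℝ := fun x => ∫ u in (0:ℝ)..x, lamS' u with hGS
  have hG0c : Continuous G0 :=
    intervalIntegral.continuous_primitive (fun a b => h0'.intervalIntegrable a b) 0
  have hGSc : Continuous GS :=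
    intervalIntegral.continuous_primitive (fun a b => hS'.intervalIntegrable a b) 0
  -- equality with original cumulative hazards on `Ici 0`
  have hcum0 : ∀ s : ℝ, 0 ≤ s → cumHaz lam0 s = G0 s := by
    intro s hs
    apply intervalIntegral.integral_congr
    intro u hu
    rw [Set.uIcc_of_le hs] at hu
    simp [hlam0', max_eq_left hu.1]
  have hcumS : ∀ s : ℝ, 0 ≤ s → cumHaz lamS s = GS s := by
    intro s hs
    apply intervalIntegral.integral_congr
    intro u hu
    rw [Set.uIcc_of_le hs] at hu
    simp [hlamS', max_eq_left hu.1]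
  -- post cumulative hazard
  set H : ℝ → ℝ → ℝ := fun t s => ∫ u in s..t, lam1' u s with hH
  have hcum1 : ∀ t s : ℝ, 0 ≤ s → s ≤ t → cumHaz1 lam1 t s = H t s := by
    intro t s hs hst
    apply intervalIntegral.integral_congr
    intro u hu
    have hs0 : max s 0 = s := max_eq_left hs
    rw [Set.uIcc_of_le hst] at hu
    simp [hlam1', hs0, max_eq_left hu.1]
  have hHnn : ∀ t s : ℝ, s ≤ t → 0 ≤ H t s := by
    intro t s hst
    exact intervalIntegral.integral_nonneg hst (fun u _ => h1'nn u s)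
  -- continuity of `s ↦ H t s`
  have hHcont : ∀ t : ℝ, Continuous fun s => H t s := by
    intro t
    have h1 : Continuous fun s : ℝ => ∫ u in (0:ℝ)..t, lam1' u s :=
      intervalIntegral.continuous_parametric_intervalIntegral_of_continuous
        (f := fun s u => lam1' u s) (μ := MeasureTheory.volume)
        (by exact h1'.comp (continuous_snd.prodMk continuous_fst)) continuous_const
    have h2 : Continuous fun s : ℝ => ∫ u in (0:ℝ)..s, lam1' u s :=
      intervalIntegral.continuous_parametric_intervalIntegral_of_continuous
        (f := fun s u => lam1' u s) (μ := MeasureTheory.volume)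
        (by exact h1'.comp (continuous_snd.prodMk continuous_fst)) continuous_id
    have : (fun s => H t s) = fun s =>
        (∫ u in (0:ℝ)..t, lam1' u s) - ∫ u in (0:ℝ)..s, lam1' u s := by
      funext s
      have hc : Continuous fun u => lam1' u s := by
        exact h1'.comp (continuous_id.prodMk continuous_const)
      show (∫ u in s..t, lam1' u s)
          = (∫ u in (0:ℝ)..t, lam1' u s) - ∫ u in (0:ℝ)..s, lam1' u s
      rw [← intervalIntegral.integral_interval_sub_left
        (hc.intervalIntegrable 0 t) (hc.intervalIntegrable 0 s)]
    rw [this]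
    exact h1.sub h2
  -- the integrand of the remainder term
  set ρ : ℝ → ℝ → ℝ := fun t s => Real.exp (-G0 s - GS s) * lamS' s * Real.exp (-H t s)
    with hρ
  have hρcont : ∀ t, Continuous fun s => ρ t s := by
    intro t
    exact ((Real.continuous_exp.comp ((hG0c.neg).sub hGSc)).mul hS').mul
      (Real.continuous_exp.comp (hHcont t).neg)
  have hρnn : ∀ t s, 0 ≤ ρ t s := by
    intro t s
    exact mul_nonneg (mul_nonneg (Real.exp_pos _).le (hS'nn s)) (Real.exp_pos _).le
  -- remainder term
  set R : ℝ → ℝ := fun t => ∫ s in (0:ℝ)..t, ρ t s with hRdef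
  -- bound for DCT
  set bound : ℝ → ℝ := Set.indicator (Set.Ioi (0:ℝ))
    (fun s => Real.exp (-G0 s - GS s) * lamS' s) with hbound
  have hbound_nn : ∀ s, 0 ≤ bound s := by
    intro s
    apply Set.indicator_nonneg
    intro u _
    exact mul_nonneg (Real.exp_pos _).le (hS'nn u)
  -- integrability of the bound
  have hbase_cont : Continuous fun s => Real.exp (-G0 s - GS s) * lamS' s :=
    (Real.continuous_exp.comp ((hG0c.neg).sub hGSc)).mul hS'
  have hbase_nn : ∀ s, 0 ≤ Real.exp (-G0 s - GS s) * lamS' s := fun s =>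
    mul_nonneg (Real.exp_pos _).le (hS'nn s)
  have hbound_int : MeasureTheory.Integrable bound := by
    rw [hbound, MeasureTheory.integrable_indicator_iff measurableSet_Ioi]
    apply MeasureTheory.integrableOn_Ioi_of_intervalIntegral_norm_bounded
      (l := atTop) (b := fun t : ℝ => t) 1 0
    · intro t
      exact (hbase_cont.integrableOn_Ioc)
    · exact tendsto_id
    · filter_upwards [eventually_ge_atTop (0:ℝ)] with t ht
      have hnorm : ∀ s, ‖Real.exp (-G0 s - GS s) * lamS' s‖
          = Real.exp (-G0 s - GS s) * lamS' s := by
        intro s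
        rw [Real.norm_eq_abs, abs_of_nonneg (hbase_nn s)]
      have h1 : (∫ s in (0:ℝ)..t, ‖Real.exp (-G0 s - GS s) * lamS' s‖)
          = ∫ s in (0:ℝ)..t, Real.exp (-G0 s - GS s) * lamS' s := by
        apply intervalIntegral.integral_congr
        intro s _
        exact hnorm s
      rw [h1]
      have h2 : (∫ s in (0:ℝ)..t, Real.exp (-G0 s - GS s) * lamS' s)
          ≤ ∫ s in (0:ℝ)..t, Real.exp (-(GS s)) * lamS' s := by
        apply intervalIntegral.integral_mono_on ht
          (hbase_cont.intervalIntegrable _ _)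
          (((Real.continuous_exp.comp hGSc.neg).mul hS').intervalIntegrable _ _)
        intro s hs
        apply mul_le_mul_of_nonneg_right _ (hS'nn s)
        apply Real.exp_le_exp.mpr
        have hG0nn : 0 ≤ G0 s :=
          intervalIntegral.integral_nonneg hs.1 (fun u _ => h0'nn u)
        show -G0 s - GS s ≤ -GS s
        linarith
      have h3 : (∫ s in (0:ℝ)..t, Real.exp (-(GS s)) * lamS' s)
          = 1 - Real.exp (-(GS t)) := by
        simpa only [hGS] using ftc_exp lamS' hS' t
      have h4 : (0:ℝ) < Real.exp (-(GS t)) := Real.exp_pos _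
      linarith
  -- DCT: R → 0
  have hRlim : Tendsto R atTop (nhds 0) := by
    have key : Tendsto (fun t => ∫ s : ℝ, Set.indicator (Set.Ioc 0 t) (ρ t) s) atTop
        (nhds (∫ _ : ℝ, (0:ℝ))) := by
      apply MeasureTheory.tendsto_integral_filter_of_dominated_convergence bound
      · filter_upwards with t
        exact ((hρcont t).aestronglyMeasurable).indicator measurableSet_Ioc
      · filter_upwards with t
        filter_upwards with s
        by_cases hs : s ∈ Set.Ioc 0 t
        · rw [Set.indicator_of_mem hs]
          rw [Real.norm_eq_abs, abs_of_nonneg (hρnn t s)]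
          have hsIoi : s ∈ Set.Ioi (0:ℝ) := hs.1
          rw [hbound, Set.indicator_of_mem hsIoi]
          have : Real.exp (-H t s) ≤ 1 := by
            rw [Real.exp_le_one_iff]
            simp only [neg_nonpos]
            exact hHnn t s hs.2
          calc Real.exp (-G0 s - GS s) * lamS' s * Real.exp (-H t s)
              ≤ Real.exp (-G0 s - GS s) * lamS' s * 1 := by
                apply mul_le_mul_of_nonneg_left this
                  (mul_nonneg (Real.exp_pos _).le (hS'nn s))
            _ = Real.exp (-G0 s - GS s) * lamS' s := by ring
        · rw [Set.indicator_of_notMem hs]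
          simpa using hbound_nn s
      · exact hbound_int
      · filter_upwards with s
        by_cases hs : 0 < s
        · -- for t ≥ s the value is `c * exp (-H t s)` and `H t s → ∞`
          have hHtop : Tendsto (fun t => H t s) atTop atTop := by
            apply Tendsto.congr' _ (h1top s hs.le)
            filter_upwards [eventually_ge_atTop s] with t ht
            exact hcum1 t s hs.le ht
          have hexp : Tendsto (fun t => Real.exp (-H t s)) atTop (nhds 0) := by
            exact Real.tendsto_exp_atBot.comp (tendsto_neg_atTop_atBot.comp hHtop)
          have : Tendsto (fun t => ρ t s) atTop (nhds 0) := by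
            have := hexp.const_mul (Real.exp (-G0 s - GS s) * lamS' s)
            simpa [hρ, mul_assoc] using this
          apply Tendsto.congr' _ this
          filter_upwards [eventually_ge_atTop s] with t ht
          rw [Set.indicator_of_mem (Set.mem_Ioc.mpr ⟨hs, ht⟩)]
        · -- s ≤ 0: indicator is 0 always
          have : ∀ t, Set.indicator (Set.Ioc 0 t) (ρ t) s = 0 := by
            intro t
            apply Set.indicator_of_notMem
            intro hmem
            exact hs hmem.1
          simp only [this]
          exact tendsto_const_nhds
    have h0 : (∫ _ : ℝ, (0:ℝ)) = 0 := by simp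
    rw [h0] at key
    apply Tendsto.congr' _ key
    filter_upwards [eventually_ge_atTop (0:ℝ)] with t ht
    show (∫ s : ℝ, Set.indicator (Set.Ioc 0 t) (ρ t) s) = ∫ s in (0:ℝ)..t, ρ t s
    rw [intervalIntegral.integral_of_le ht, MeasureTheory.integral_indicator measurableSet_Ioc]
  -- rewrite cif for t ≥ 0
  have hcif : ∀ᶠ t in atTop, cif lamS lam0 lam1 t = (1 - Real.exp (-(G0 t + GS t))) - R t := by
    filter_upwards [eventually_ge_atTop (0:ℝ)] with t ht
    have hA : (∫ s in (0:ℝ)..t, Real.exp (-cumHaz lam0 s - cumHaz lamS s) * lam0 s)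
        = ∫ s in (0:ℝ)..t, Real.exp (-G0 s - GS s) * lam0' s := by
      apply intervalIntegral.integral_congr
      intro s hs
      rw [Set.uIcc_of_le ht] at hs
      show Real.exp (-cumHaz lam0 s - cumHaz lamS s) * lam0 s
          = Real.exp (-G0 s - GS s) * lam0' s
      rw [hcum0 s hs.1, hcumS s hs.1]
      simp [hlam0', max_eq_left hs.1]
    have hB : (∫ s in (0:ℝ)..t, Real.exp (-cumHaz lam0 s - cumHaz lamS s) * lamS s *
          (1 - Real.exp (-cumHaz1 lam1 t s)))
        = ∫ s in (0:ℝ)..t, Real.exp (-G0 s - GS s) * lamS' s *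
          (1 - Real.exp (-H t s)) := by
      apply intervalIntegral.integral_congr
      intro s hs
      rw [Set.uIcc_of_le ht] at hs
      show Real.exp (-cumHaz lam0 s - cumHaz lamS s) * lamS s *
            (1 - Real.exp (-cumHaz1 lam1 t s))
          = Real.exp (-G0 s - GS s) * lamS' s * (1 - Real.exp (-H t s))
      rw [hcum0 s hs.1, hcumS s hs.1, hcum1 t s hs.1 hs.2]
      simp [hlamS', max_eq_left hs.1]
    rw [cif, hA, hB]
    have hsplit : (∫ s in (0:ℝ)..t, Real.exp (-G0 s - GS s) * lamS' s *
          (1 - Real.exp (-H t s)))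
        = (∫ s in (0:ℝ)..t, Real.exp (-G0 s - GS s) * lamS' s) - R t := by
      rw [hRdef]
      rw [← intervalIntegral.integral_sub (hbase_cont.intervalIntegrable _ _)
        ((hρcont t).intervalIntegrable _ _)]
      apply intervalIntegral.integral_congr
      intro s _
      show Real.exp (-G0 s - GS s) * lamS' s * (1 - Real.exp (-H t s))
          = Real.exp (-G0 s - GS s) * lamS' s - ρ t s
      rw [hρ]
      ring
    rw [hsplit]
    have hcomb : (∫ s in (0:ℝ)..t, Real.exp (-G0 s - GS s) * lam0' s)
        + (∫ s in (0:ℝ)..t, Real.exp (-G0 s - GS s) * lamS' s)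
        = ∫ s in (0:ℝ)..t, Real.exp (-(∫ u in (0:ℝ)..s, (lam0' u + lamS' u)))
          * (lam0' s + lamS' s) := by
      have hAcont : Continuous fun s => Real.exp (-G0 s - GS s) * lam0' s := by
        exact (Real.continuous_exp.comp ((hG0c.neg).sub hGSc)).mul h0'
      rw [← intervalIntegral.integral_add
        (hAcont.intervalIntegrable _ _)
        (hbase_cont.intervalIntegrable _ _)]
      apply intervalIntegral.integral_congr
      intro s _
      show Real.exp (-G0 s - GS s) * lam0' s + Real.exp (-G0 s - GS s) * lamS' s
          = Real.exp (-(∫ u in (0:ℝ)..s, (lam0' u + lamS' u))) * (lam0' s + lamS' s)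
      have : (∫ u in (0:ℝ)..s, (lam0' u + lamS' u)) = G0 s + GS s :=
        intervalIntegral.integral_add (h0'.intervalIntegrable _ _) (hS'.intervalIntegrable _ _)
      rw [this]
      ring_nf
    have hftc := ftc_exp (fun u => lam0' u + lamS' u) (h0'.add hS') t
    have hGt : (∫ u in (0:ℝ)..t, (lam0' u + lamS' u)) = G0 t + GS t :=
      intervalIntegral.integral_add (h0'.intervalIntegrable _ _) (hS'.intervalIntegrable _ _)
    rw [hGt] at hftc
    linarith [hcomb, hftc]
  -- conclude
  have hGtop : Tendsto (fun t => G0 t + GS t) atTop atTop := by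
    apply Tendsto.congr' _ hsum
    filter_upwards [eventually_ge_atTop (0:ℝ)] with t ht
    rw [hcum0 t ht, hcumS t ht]
  have hexp0 : Tendsto (fun t => Real.exp (-(G0 t + GS t))) atTop (nhds 0) :=
    Real.tendsto_exp_atBot.comp (tendsto_neg_atTop_atBot.comp hGtop)
  have hmain : Tendsto (fun t => (1 - Real.exp (-(G0 t + GS t))) - R t) atTop (nhds 1) := by
    have h1 : Tendsto (fun t => 1 - Real.exp (-(G0 t + GS t))) atTop (nhds 1) := by
      have := (tendsto_const_nhds (x := (1:ℝ)) (f := atTop)).sub hexp0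
      simpa using this
    have := h1.sub hRlim
    simpa using this
  exact Tendsto.congr' (hcif.mono fun t ht => ht.symm) hmain
end

section
/- If the intermediate event does not modify the terminal-event hazard, i.e. λ₁(t,s) = λ₀(t) for all 0 ≤ s ≤ t, then the counterfactual cumulative incidence function does not depend on the intermediate-event hazard at all: F(t) = 1 − exp{−Λ₀(t)} for every t ≥ 0. -/
open MeasureTheory ProbabilityTheory Filter Set

/-- if `λ₁(t,s) = λ₀(t)` for all `0 ≤ s ≤ t`, then
`F(t) = 1 − exp(−Λ₀(t))` for every `t ≥ 0`. -/
theorem cif_no_modification (lamS lam0 : ℝ → ℝ) (lam1 : ℝ → ℝ → ℝ)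
    (hScont : ContinuousOn lamS (Set.Ici 0))
    (h0cont : ContinuousOn lam0 (Set.Ici 0))
    (h1cont : ContinuousOn (fun p : ℝ × ℝ => lam1 p.1 p.2) {p : ℝ × ℝ | 0 ≤ p.2 ∧ p.2 ≤ p.1})
    (hSnn : ∀ t ∈ Set.Ici (0:ℝ), 0 ≤ lamS t)
    (h0nn : ∀ t ∈ Set.Ici (0:ℝ), 0 ≤ lam0 t)
    (h1nn : ∀ s t : ℝ, 0 ≤ s → s ≤ t → 0 ≤ lam1 t s)
    (hnull : ∀ s t : ℝ, 0 ≤ s → s ≤ t → lam1 t s = lam0 t) :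
    ∀ t : ℝ, 0 ≤ t → cif lamS lam0 lam1 t = 1 - Real.exp (-cumHaz lam0 t) := by
  intro t ht
  have hIcc : Set.uIcc (0:ℝ) t = Set.Icc 0 t := Set.uIcc_of_le ht
  -- integrability of hazards
  have h0c : ContinuousOn lam0 (Set.Icc 0 t) := h0cont.mono (Set.Icc_subset_Ici_self)
  have hSc : ContinuousOn lamS (Set.Icc 0 t) := hScont.mono (Set.Icc_subset_Ici_self)
  have h0i : ∀ s ∈ Set.Icc (0:ℝ) t, IntervalIntegrable lam0 volume 0 s := by
    intro s hs
    apply ContinuousOn.intervalIntegrable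
    rw [Set.uIcc_of_le hs.1]
    exact h0c.mono (Set.Icc_subset_Icc le_rfl hs.2)
  have hSi : ∀ s ∈ Set.Icc (0:ℝ) t, IntervalIntegrable lamS volume 0 s := by
    intro s hs
    apply ContinuousOn.intervalIntegrable
    rw [Set.uIcc_of_le hs.1]
    exact hSc.mono (Set.Icc_subset_Icc le_rfl hs.2)
  -- continuity of cumulative hazards
  have hC0 : ContinuousOn (cumHaz lam0) (Set.Icc 0 t) := by
    have := intervalIntegral.continuousOn_primitive_interval
      (f := lam0) (μ := volume) (a := (0:ℝ)) (b := t) ?_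
    · rwa [hIcc] at this
    · rw [hIcc]; exact h0c.integrableOn_compact isCompact_Icc
  have hCS : ContinuousOn (cumHaz lamS) (Set.Icc 0 t) := by
    have := intervalIntegral.continuousOn_primitive_interval
      (f := lamS) (μ := volume) (a := (0:ℝ)) (b := t) ?_
    · rwa [hIcc] at this
    · rw [hIcc]; exact hSc.integrableOn_compact isCompact_Icc
  -- rewrite cumHaz1 on Icc 0 t
  have hC1 : ∀ s ∈ Set.Icc (0:ℝ) t, cumHaz1 lam1 t s = cumHaz lam0 t - cumHaz lam0 s := by
    intro s hs
    have h1 : cumHaz1 lam1 t s = ∫ u in s..t, lam0 u := by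
      apply intervalIntegral.integral_congr
      intro u hu
      rw [Set.uIcc_of_le hs.2] at hu
      exact hnull s u hs.1 hu.1
    rw [h1, cumHaz, cumHaz,
      ← intervalIntegral.integral_interval_sub_left (h0i t (Set.right_mem_Icc.mpr ht))
        (h0i s hs)]
  -- the combined integrand
  set f' : ℝ → ℝ := fun s => Real.exp (-cumHaz lam0 s - cumHaz lamS s) * lam0 s +
      Real.exp (-cumHaz lam0 s - cumHaz lamS s) * lamS s *
        (1 - Real.exp (-(cumHaz lam0 t - cumHaz lam0 s))) with hf'
  -- antiderivative
  set Φ : ℝ → ℝ := fun s => -Real.exp (-cumHaz lam0 s - cumHaz lamS s) +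
      Real.exp (-cumHaz lam0 t) * Real.exp (-cumHaz lamS s) with hΦ
  have hΦcont : ContinuousOn Φ (Set.Icc 0 t) := by
    apply ContinuousOn.add
    · exact ((Real.continuous_exp.comp_continuousOn ((hC0.neg).sub hCS)).neg)
    · exact continuousOn_const.mul (Real.continuous_exp.comp_continuousOn hCS.neg)
  -- integrability of integrands
  have hint1 : IntervalIntegrable (fun s => Real.exp (-cumHaz lam0 s - cumHaz lamS s) * lam0 s)
      volume 0 t := by
    apply ContinuousOn.intervalIntegrable
    rw [hIcc]
    exact (Real.continuous_exp.comp_continuousOn ((hC0.neg).sub hCS)).mul h0c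
  have hint2' : IntervalIntegrable (fun s => Real.exp (-cumHaz lam0 s - cumHaz lamS s) * lamS s *
      (1 - Real.exp (-(cumHaz lam0 t - cumHaz lam0 s)))) volume 0 t := by
    apply ContinuousOn.intervalIntegrable
    rw [hIcc]
    exact ((Real.continuous_exp.comp_continuousOn ((hC0.neg).sub hCS)).mul hSc).mul
      (continuousOn_const.sub (Real.continuous_exp.comp_continuousOn
        ((continuousOn_const.sub hC0).neg)))
  have hintf' : IntervalIntegrable f' volume 0 t := hint1.add hint2'
  -- derivatives at interior points
  have hderiv : ∀ s ∈ Set.Ioo (0:ℝ) t, HasDerivAt Φ (f' s) s := by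
    intro s hs
    have hsmem : s ∈ Set.Icc (0:ℝ) t := Set.Ioo_subset_Icc_self hs
    have hnhds : Set.Ici (0:ℝ) ∈ nhds s := Ici_mem_nhds hs.1
    have hmeas0 : StronglyMeasurableAtFilter lam0 (nhds s) volume := by
      refine ⟨Set.Ici 0, hnhds, ?_⟩
      exact h0cont.aestronglyMeasurable measurableSet_Ici
    have hmeasS : StronglyMeasurableAtFilter lamS (nhds s) volume := by
      refine ⟨Set.Ici 0, hnhds, ?_⟩
      exact hScont.aestronglyMeasurable measurableSet_Ici
    have hd0 : HasDerivAt (cumHaz lam0) (lam0 s) s :=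
      intervalIntegral.integral_hasDerivAt_right (h0i s hsmem) hmeas0
        (h0cont.continuousAt hnhds)
    have hdS : HasDerivAt (cumHaz lamS) (lamS s) s :=
      intervalIntegral.integral_hasDerivAt_right (hSi s hsmem) hmeasS
        (hScont.continuousAt hnhds)
    have h1 : HasDerivAt (fun s => -Real.exp (-cumHaz lam0 s - cumHaz lamS s))
        ((lam0 s + lamS s) * Real.exp (-cumHaz lam0 s - cumHaz lamS s)) s := by
      have := ((hd0.neg.sub hdS).exp).neg
      refine this.congr_deriv ?_
      simp only [Pi.sub_apply, Pi.neg_apply]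
      ring
    have h2 : HasDerivAt (fun s => Real.exp (-cumHaz lam0 t) * Real.exp (-cumHaz lamS s))
        (Real.exp (-cumHaz lam0 t) * (-lamS s * Real.exp (-cumHaz lamS s))) s := by
      have := (hdS.neg.exp).const_mul (Real.exp (-cumHaz lam0 t))
      refine this.congr_deriv ?_
      simp only [Pi.neg_apply]
      ring
    have := h1.add h2
    refine this.congr_deriv (Eq.symm ?_)
    simp only [hf']
    have key : Real.exp (-cumHaz lam0 s - cumHaz lamS s) *
        Real.exp (-(cumHaz lam0 t - cumHaz lam0 s))
        = Real.exp (-cumHaz lam0 t) * Real.exp (-cumHaz lamS s) := by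
      rw [← Real.exp_add, ← Real.exp_add]; ring_nf
    linear_combination (-lamS s) * key
  -- FTC
  have hFTC : ∫ s in (0:ℝ)..t, f' s = Φ t - Φ 0 := by
    apply intervalIntegral.integral_eq_sub_of_hasDeriv_right_of_le ht hΦcont
      (fun x hx => (hderiv x hx).hasDerivWithinAt) hintf'
  -- assemble
  have hcif : cif lamS lam0 lam1 t = ∫ s in (0:ℝ)..t, f' s := by
    rw [cif]
    have : (∫ s in (0:ℝ)..t, Real.exp (-cumHaz lam0 s - cumHaz lamS s) * lamS s *
        (1 - Real.exp (-cumHaz1 lam1 t s)))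
        = ∫ s in (0:ℝ)..t, Real.exp (-cumHaz lam0 s - cumHaz lamS s) * lamS s *
        (1 - Real.exp (-(cumHaz lam0 t - cumHaz lam0 s))) := by
      apply intervalIntegral.integral_congr
      intro s hs
      rw [hIcc] at hs
      simp only [hC1 s hs]
    rw [this, ← intervalIntegral.integral_add hint1 hint2']
  rw [hcif, hFTC]
  have hΦ0 : cumHaz lam0 0 = 0 := intervalIntegral.integral_same
  have hΦS0 : cumHaz lamS 0 = 0 := intervalIntegral.integral_same
  have key2 : Real.exp (-cumHaz lam0 t - cumHaz lamS t)
      = Real.exp (-cumHaz lam0 t) * Real.exp (-cumHaz lamS t) := by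
    rw [← Real.exp_add]; ring_nf
  simp only [hΦ, hΦ0, hΦS0, neg_zero, sub_zero, Real.exp_zero, mul_one]
  linear_combination -key2
end

section
/- Sharp null for the interventional indirect effect: suppose λ₁(t,s) = λ₀(t) for all 0 ≤ s ≤ t, and let λ⋆⁰ and λ⋆¹ be two continuous nonnegative intermediate-event hazards with associated counterfactual cumulative incidence functions F⁰ and F¹ (obtained from the identification formula with the same λ₀ and λ₁ but intermediate-event hazard λ⋆⁰ and λ⋆¹ respectively). Then F¹(t) − F⁰(t) = 0 for all t ≥ 0, i.e. the interventional indirect effect vanishes identically. -/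
open MeasureTheory ProbabilityTheory Filter Set

lemma cumHaz_zero' (f : ℝ → ℝ) : cumHaz f 0 = 0 := by simp [cumHaz]

lemma intInt' (f : ℝ → ℝ) (hf : ContinuousOn f (Ici 0)) {a b : ℝ} (ha : 0 ≤ a) (hb : 0 ≤ b) :
    IntervalIntegrable f MeasureTheory.volume a b := by
  apply ContinuousOn.intervalIntegrable
  apply hf.mono
  intro x hx
  rcases le_total a b with h | h
  · rw [uIcc_of_le h] at hx; exact le_trans ha hx.1
  · rw [uIcc_of_ge h] at hx; exact le_trans hb hx.1

lemma cumHaz_contOn' (f : ℝ → ℝ) (hf : ContinuousOn f (Ici 0)) {t : ℝ} (ht : 0 ≤ t) :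
    ContinuousOn (cumHaz f) (Icc 0 t) := by
  have h1 : IntegrableOn f (uIcc 0 t) MeasureTheory.volume := by
    rw [uIcc_of_le ht]
    exact (hf.mono Icc_subset_Ici_self).integrableOn_compact isCompact_Icc
  have := intervalIntegral.continuousOn_primitive_interval h1
  rw [uIcc_of_le ht] at this
  exact this

lemma cumHaz_hasDerivAt' (f : ℝ → ℝ) (hf : ContinuousOn f (Ici 0)) {s : ℝ} (hs : 0 < s) :
    HasDerivAt (cumHaz f) (f s) s := by
  have hint : IntervalIntegrable f MeasureTheory.volume 0 s := intInt' f hf le_rfl hs.le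
  have hca : ∀ x ∈ Ioi (0:ℝ), ContinuousAt f x := fun x hx =>
    hf.continuousAt (Ici_mem_nhds hx)
  exact intervalIntegral.integral_hasDerivAt_right hint
    (ContinuousAt.stronglyMeasurableAtFilter isOpen_Ioi hca s hs) (hca s hs)

/-- Key FTC computation: `∫₀ᵗ e^{-Λ(s)} λ(s) ds = 1 - e^{-Λ(t)}`. -/
lemma key_integral (f : ℝ → ℝ) (hf : ContinuousOn f (Ici 0)) {t : ℝ} (ht : 0 ≤ t) :
    ∫ s in (0:ℝ)..t, Real.exp (-(cumHaz f s)) * f s = 1 - Real.exp (-(cumHaz f t)) := by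
  have hΛ : ContinuousOn (cumHaz f) (Icc 0 t) := cumHaz_contOn' f hf ht
  have hcont : ContinuousOn (fun s => -Real.exp (-(cumHaz f s))) (Icc 0 t) :=
    ((Real.continuous_exp.comp_continuousOn hΛ.neg)).neg
  have hderiv : ∀ x ∈ Ioo (0:ℝ) t,
      HasDerivWithinAt (fun s => -Real.exp (-(cumHaz f s)))
        (Real.exp (-(cumHaz f x)) * f x) (Ioi x) x := by
    intro x hx
    have hd : HasDerivAt (cumHaz f) (f x) x := cumHaz_hasDerivAt' f hf hx.1
    have := (hd.neg.exp).neg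
    have h2 : HasDerivAt (fun s => -Real.exp (-(cumHaz f s)))
        (Real.exp (-(cumHaz f x)) * f x) x := by
      exact this.congr_deriv (by rw [Pi.neg_apply]; ring)
    exact h2.hasDerivWithinAt
  have hint : IntervalIntegrable (fun s => Real.exp (-(cumHaz f s)) * f s)
      MeasureTheory.volume 0 t := by
    apply ContinuousOn.intervalIntegrable
    rw [uIcc_of_le ht]
    exact ((Real.continuous_exp.comp_continuousOn hΛ.neg)).mul
      (hf.mono Icc_subset_Ici_self)
  have := intervalIntegral.integral_eq_sub_of_hasDeriv_right_of_le ht hcont hderiv hint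
  rw [this, cumHaz_zero']
  simp only [neg_zero, Real.exp_zero]
  ring

/-- Under the sharp null, the CIF equals `1 - e^{-Λ₀(t)}`, independent of `λ⋆`. -/
lemma cif_null_value (lamS lam0 : ℝ → ℝ) (lam1 : ℝ → ℝ → ℝ)
    (hScont : ContinuousOn lamS (Set.Ici 0))
    (h0cont : ContinuousOn lam0 (Set.Ici 0))
    (hnull : ∀ s t : ℝ, 0 ≤ s → s ≤ t → lam1 t s = lam0 t)
    {t : ℝ} (ht : 0 ≤ t) :
    cif lamS lam0 lam1 t = 1 - Real.exp (-(cumHaz lam0 t)) := by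
  set Λ0 := cumHaz lam0
  set ΛS := cumHaz lamS
  have hΛ0 : ContinuousOn Λ0 (Icc 0 t) := cumHaz_contOn' lam0 h0cont ht
  have hΛS : ContinuousOn ΛS (Icc 0 t) := cumHaz_contOn' lamS hScont ht
  have hHcont : ContinuousOn (fun s => Real.exp (-Λ0 s - ΛS s)) (Icc 0 t) :=
    Real.continuous_exp.comp_continuousOn (hΛ0.neg.sub hΛS)
  -- cumHaz1 identity on [0,t]
  have hc1 : ∀ s ∈ Icc (0:ℝ) t, cumHaz1 lam1 t s = Λ0 t - Λ0 s := by
    intro s hs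
    have h1 : (∫ u in s..t, lam1 u s) = ∫ u in s..t, lam0 u := by
      apply intervalIntegral.integral_congr
      intro u hu
      rw [uIcc_of_le hs.2] at hu
      exact hnull s u hs.1 hu.1
    have h2 : (∫ u in s..t, lam0 u) = Λ0 t - Λ0 s := by
      have ha : IntervalIntegrable lam0 MeasureTheory.volume 0 t := intInt' lam0 h0cont le_rfl ht
      have hb : IntervalIntegrable lam0 MeasureTheory.volume 0 s := intInt' lam0 h0cont le_rfl hs.1
      exact (intervalIntegral.integral_interval_sub_left ha hb).symm
    rw [cumHaz1, h1, h2]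
  -- rewrite second integral's integrand
  have hsplit : ∀ s ∈ Icc (0:ℝ) t,
      Real.exp (-Λ0 s - ΛS s) * lamS s * (1 - Real.exp (-cumHaz1 lam1 t s))
        = Real.exp (-Λ0 s - ΛS s) * lamS s
          - Real.exp (-(Λ0 t)) * (Real.exp (-(ΛS s)) * lamS s) := by
    intro s hs
    rw [hc1 s hs]
    have : Real.exp (-(Λ0 t - Λ0 s)) = Real.exp (-(Λ0 t)) * Real.exp (Λ0 s) := by
      rw [← Real.exp_add]; ring_nf
    rw [this]
    have h3 : Real.exp (-Λ0 s - ΛS s) * Real.exp (Λ0 s) = Real.exp (-(ΛS s)) := by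
      rw [← Real.exp_add]; ring_nf
    calc Real.exp (-Λ0 s - ΛS s) * lamS s * (1 - Real.exp (-(Λ0 t)) * Real.exp (Λ0 s))
        = Real.exp (-Λ0 s - ΛS s) * lamS s
          - Real.exp (-(Λ0 t)) * ((Real.exp (-Λ0 s - ΛS s) * Real.exp (Λ0 s)) * lamS s) := by
          ring
      _ = _ := by rw [h3]
  -- integrability facts
  have hintHS : IntervalIntegrable (fun s => Real.exp (-Λ0 s - ΛS s) * lamS s)
      MeasureTheory.volume 0 t := by
    apply ContinuousOn.intervalIntegrable
    rw [uIcc_of_le ht]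
    exact hHcont.mul (hScont.mono Icc_subset_Ici_self)
  have hintS : IntervalIntegrable (fun s => Real.exp (-(ΛS s)) * lamS s)
      MeasureTheory.volume 0 t := by
    apply ContinuousOn.intervalIntegrable
    rw [uIcc_of_le ht]
    exact (Real.continuous_exp.comp_continuousOn hΛS.neg).mul
      (hScont.mono Icc_subset_Ici_self)
  -- compute the second integral
  have hsecond : (∫ s in (0:ℝ)..t, Real.exp (-Λ0 s - ΛS s) * lamS s *
        (1 - Real.exp (-cumHaz1 lam1 t s)))
      = (∫ s in (0:ℝ)..t, Real.exp (-Λ0 s - ΛS s) * lamS s)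
        - Real.exp (-(Λ0 t)) * (1 - Real.exp (-(ΛS t))) := by
    have h1 : (∫ s in (0:ℝ)..t, Real.exp (-Λ0 s - ΛS s) * lamS s *
          (1 - Real.exp (-cumHaz1 lam1 t s)))
        = ∫ s in (0:ℝ)..t, (Real.exp (-Λ0 s - ΛS s) * lamS s
            - Real.exp (-(Λ0 t)) * (Real.exp (-(ΛS s)) * lamS s)) := by
      apply intervalIntegral.integral_congr
      intro s hs
      rw [uIcc_of_le ht] at hs
      exact hsplit s hs
    rw [h1, intervalIntegral.integral_sub hintHS (hintS.const_mul _),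
        intervalIntegral.integral_const_mul, key_integral lamS hScont ht]
  -- combine
  have hfirstplus : (∫ s in (0:ℝ)..t, Real.exp (-Λ0 s - ΛS s) * lam0 s)
      + (∫ s in (0:ℝ)..t, Real.exp (-Λ0 s - ΛS s) * lamS s)
      = 1 - Real.exp (-(Λ0 t + ΛS t)) := by
    have hint0 : IntervalIntegrable (fun s => Real.exp (-Λ0 s - ΛS s) * lam0 s)
        MeasureTheory.volume 0 t := by
      apply ContinuousOn.intervalIntegrable
      rw [uIcc_of_le ht]
      exact hHcont.mul (h0cont.mono Icc_subset_Ici_self)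
    rw [← intervalIntegral.integral_add hint0 hintHS]
    have hsumc : ContinuousOn (fun u => lam0 u + lamS u) (Ici 0) := h0cont.add hScont
    have hkey := key_integral (fun u => lam0 u + lamS u) hsumc ht
    have hch : ∀ s ∈ Icc (0:ℝ) t, cumHaz (fun u => lam0 u + lamS u) s = Λ0 s + ΛS s := by
      intro s hs
      exact intervalIntegral.integral_add (intInt' lam0 h0cont le_rfl hs.1)
        (intInt' lamS hScont le_rfl hs.1)
    have h2 : (∫ s in (0:ℝ)..t, Real.exp (-(cumHaz (fun u => lam0 u + lamS u) s))
          * (lam0 s + lamS s))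
        = ∫ s in (0:ℝ)..t, (Real.exp (-Λ0 s - ΛS s) * lam0 s
            + Real.exp (-Λ0 s - ΛS s) * lamS s) := by
      apply intervalIntegral.integral_congr
      intro s hs
      rw [uIcc_of_le ht] at hs
      dsimp only
      rw [hch s hs]
      ring_nf
    rw [← h2, hkey, hch t ⟨ht, le_rfl⟩]
  rw [cif, hsecond]
  have : (∫ s in (0:ℝ)..t, Real.exp (-cumHaz lam0 s - cumHaz lamS s) * lam0 s)
      + (∫ s in (0:ℝ)..t, Real.exp (-cumHaz lam0 s - cumHaz lamS s) * lamS s)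
      = 1 - Real.exp (-(Λ0 t + ΛS t)) := hfirstplus
  have hexp : Real.exp (-(Λ0 t + ΛS t)) = Real.exp (-(Λ0 t)) * Real.exp (-(ΛS t)) := by
    rw [← Real.exp_add]; ring_nf
  nlinarith [this, hexp]

/-- sharp null for the interventional indirect effect. If
`λ₁(t,s) = λ₀(t)` for all `0 ≤ s ≤ t`, then for any two intermediate-event hazards
`λ⋆⁰, λ⋆¹` the indirect effect `F¹(t) − F⁰(t)` vanishes identically. -/
theorem cif_indirect_sharp_null (lamS0 lamS1 lam0 : ℝ → ℝ) (lam1 : ℝ → ℝ → ℝ)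
    (hS0cont : ContinuousOn lamS0 (Set.Ici 0))
    (hS1cont : ContinuousOn lamS1 (Set.Ici 0))
    (h0cont : ContinuousOn lam0 (Set.Ici 0))
    (h1cont : ContinuousOn (fun p : ℝ × ℝ => lam1 p.1 p.2) {p : ℝ × ℝ | 0 ≤ p.2 ∧ p.2 ≤ p.1})
    (hS0nn : ∀ t ∈ Set.Ici (0:ℝ), 0 ≤ lamS0 t)
    (hS1nn : ∀ t ∈ Set.Ici (0:ℝ), 0 ≤ lamS1 t)
    (h0nn : ∀ t ∈ Set.Ici (0:ℝ), 0 ≤ lam0 t)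
    (h1nn : ∀ s t : ℝ, 0 ≤ s → s ≤ t → 0 ≤ lam1 t s)
    (hnull : ∀ s t : ℝ, 0 ≤ s → s ≤ t → lam1 t s = lam0 t) :
    ∀ t : ℝ, 0 ≤ t → cif lamS1 lam0 lam1 t - cif lamS0 lam0 lam1 t = 0 := by
  intro t ht
  rw [cif_null_value lamS1 lam0 lam1 hS1cont h0cont hnull ht,
      cif_null_value lamS0 lam0 lam1 hS0cont h0cont hnull ht]
  ring
end

section
/- Monotonicity of the counterfactual cumulative incidence in the pre-intermediate terminal hazard: let λ₀ᵃ and λ₀ᵇ be two continuous nonnegative pre-intermediate terminal hazards with λ₀ᵃ(t) ≤ λ₀ᵇ(t) for all t ≥ 0, and let Fᵃ and Fᵇ be the corresponding counterfactual cumulative incidence functions (with the same λ⋆ and λ₁). Then Fᵃ(t) ≤ Fᵇ(t) for all t ≥ 0. -/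
open MeasureTheory ProbabilityTheory Filter Set

private lemma primitive_hasDerivAt (g : ℝ → ℝ) (hg : Continuous g) (s : ℝ) :
    HasDerivAt (fun x => ∫ u in (0:ℝ)..x, g u) (g s) s :=
  intervalIntegral.integral_hasDerivAt_right (hg.intervalIntegrable _ _)
    hg.aestronglyMeasurable.stronglyMeasurableAtFilter hg.continuousAt

private lemma primitive_continuous (g : ℝ → ℝ) (hg : Continuous g) :
    Continuous (fun x => ∫ u in (0:ℝ)..x, g u) :=
  continuous_iff_continuousAt.2 fun s => (primitive_hasDerivAt g hg s).continuousAt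

private lemma survival_integral (g h : ℝ → ℝ) (hg : Continuous g) (hh : Continuous h) (t : ℝ) :
    ∫ s in (0:ℝ)..t,
        Real.exp (-(∫ u in (0:ℝ)..s, g u) - ∫ u in (0:ℝ)..s, h u) * (g s + h s)
      = 1 - Real.exp (-(∫ u in (0:ℝ)..t, g u) - ∫ u in (0:ℝ)..t, h u) := by
  have hF : ∀ s ∈ Set.uIcc (0:ℝ) t,
      HasDerivAt (fun x => -Real.exp (-(∫ u in (0:ℝ)..x, g u) - ∫ u in (0:ℝ)..x, h u))
        (Real.exp (-(∫ u in (0:ℝ)..s, g u) - ∫ u in (0:ℝ)..s, h u) * (g s + h s)) s := by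
    intro s _
    have h1 := (((primitive_hasDerivAt g hg s).neg.sub (primitive_hasDerivAt h hh s)).exp).neg
    refine h1.congr_deriv ?_
    show -(Real.exp (-(∫ u in (0:ℝ)..s, g u) - ∫ u in (0:ℝ)..s, h u) * (-g s - h s)) = _
    ring
  have hint : IntervalIntegrable
      (fun s => Real.exp (-(∫ u in (0:ℝ)..s, g u) - ∫ u in (0:ℝ)..s, h u) * (g s + h s))
      volume 0 t :=
    ((((primitive_continuous g hg).neg.sub (primitive_continuous h hh)).rexp).mul
      (hg.add hh)).intervalIntegrable _ _
  rw [intervalIntegral.integral_eq_sub_of_hasDerivAt hF hint]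
  simp only [intervalIntegral.integral_same, neg_zero, sub_zero, zero_sub, Real.exp_zero]
  ring

/-- monotonicity of `F` in the pre-intermediate terminal hazard. -/
theorem cif_mono_in_lam0 (lamS lam0a lam0b : ℝ → ℝ) (lam1 : ℝ → ℝ → ℝ)
    (hScont : ContinuousOn lamS (Set.Ici 0))
    (h0acont : ContinuousOn lam0a (Set.Ici 0))
    (h0bcont : ContinuousOn lam0b (Set.Ici 0))
    (h1cont : ContinuousOn (fun p : ℝ × ℝ => lam1 p.1 p.2) {p : ℝ × ℝ | 0 ≤ p.2 ∧ p.2 ≤ p.1})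
    (hSnn : ∀ t ∈ Set.Ici (0:ℝ), 0 ≤ lamS t)
    (h0ann : ∀ t ∈ Set.Ici (0:ℝ), 0 ≤ lam0a t)
    (h0bnn : ∀ t ∈ Set.Ici (0:ℝ), 0 ≤ lam0b t)
    (h1nn : ∀ s t : ℝ, 0 ≤ s → s ≤ t → 0 ≤ lam1 t s)
    (hle : ∀ t ∈ Set.Ici (0:ℝ), lam0a t ≤ lam0b t) :
    ∀ t : ℝ, 0 ≤ t → cif lamS lam0a lam1 t ≤ cif lamS lam0b lam1 t := by
  intro t ht
  have hmax : Continuous fun u : ℝ => max u 0 := continuous_id.max continuous_const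
  have hmem : ∀ u : ℝ, max u 0 ∈ Set.Ici (0:ℝ) := fun u => le_max_right u 0
  set ga : ℝ → ℝ := fun u => lam0a (max u 0) with hga
  set gb : ℝ → ℝ := fun u => lam0b (max u 0) with hgb
  set gS : ℝ → ℝ := fun u => lamS (max u 0) with hgS
  have hcga : Continuous ga := h0acont.comp_continuous hmax hmem
  have hcgb : Continuous gb := h0bcont.comp_continuous hmax hmem
  have hcgS : Continuous gS := hScont.comp_continuous hmax hmem
  set g1 : ℝ → ℝ → ℝ := fun u s => lam1 (max u (max s 0)) (max s 0) with hg1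
  have hcg1 : Continuous fun p : ℝ × ℝ => g1 p.1 p.2 := by
    have hr : Continuous fun p : ℝ × ℝ => ((max p.1 (max p.2 0), max p.2 0) : ℝ × ℝ) :=
      (continuous_fst.max ((continuous_snd.max continuous_const))).prodMk
        (continuous_snd.max continuous_const)
    exact h1cont.comp_continuous hr fun p => ⟨le_max_right _ _, le_max_right _ _⟩
  set GS : ℝ → ℝ := fun x => ∫ u in (0:ℝ)..x, gS u with hGS
  set G1 : ℝ → ℝ := fun s => ∫ u in s..t, g1 u s with hG1
  have hcGS : Continuous GS := primitive_continuous gS hcgS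
  -- continuity of G1
  have hswap : Continuous (Function.uncurry fun s u => g1 u s) := by
    exact hcg1.comp continuous_swap
  have hcG1 : Continuous G1 := by
    have h1 : Continuous fun s => ∫ u in (0:ℝ)..t, g1 u s :=
      intervalIntegral.continuous_parametric_intervalIntegral_of_continuous' hswap 0 t
    have h2 : Continuous fun s : ℝ => ∫ u in (0:ℝ)..s, g1 u s :=
      intervalIntegral.continuous_parametric_intervalIntegral_of_continuous hswap continuous_id
    have heq : G1 = fun s => (∫ u in (0:ℝ)..t, g1 u s) - ∫ u in (0:ℝ)..s, g1 u s := by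
      funext s
      have hsec : Continuous fun u => g1 u s :=
        hcg1.comp (continuous_id.prodMk continuous_const)
      rw [hG1, intervalIntegral.integral_interval_sub_left (hsec.intervalIntegrable _ _)
        (hsec.intervalIntegrable _ _)]
    rw [heq]; exact h1.sub h2
  -- congruence of cumulative hazards
  have hcum_eq : ∀ (lam0 g0 : ℝ → ℝ), (∀ u, g0 u = lam0 (max u 0)) →
      ∀ s : ℝ, 0 ≤ s → cumHaz lam0 s = ∫ u in (0:ℝ)..s, g0 u := by
    intro lam0 g0 hdef s hs
    apply intervalIntegral.integral_congr
    intro u hu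
    rw [Set.uIcc_of_le hs] at hu
    rw [hdef u, max_eq_left hu.1]
  have hG1_eq : ∀ s : ℝ, 0 ≤ s → s ≤ t → cumHaz1 lam1 t s = G1 s := by
    intro s hs hst
    apply intervalIntegral.integral_congr
    intro u hu
    rw [Set.uIcc_of_le hst] at hu
    show lam1 u s = lam1 (max u (max s 0)) (max s 0)
    rw [max_eq_left hs, max_eq_left hu.1]
  -- key closed form of cif
  have key : ∀ (lam0 g0 : ℝ → ℝ), Continuous g0 → (∀ u, g0 u = lam0 (max u 0)) →
      cif lamS lam0 lam1 t
        = 1 - Real.exp (-(∫ u in (0:ℝ)..t, g0 u) - GS t)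
          - ∫ s in (0:ℝ)..t,
              Real.exp (-(∫ u in (0:ℝ)..s, g0 u) - GS s) * gS s * Real.exp (-(G1 s)) := by
    intro lam0 g0 hcg0 hdef
    set G0 : ℝ → ℝ := fun x => ∫ u in (0:ℝ)..x, g0 u with hG0def
    have hcG0 : Continuous G0 := primitive_continuous g0 hcg0
    set E : ℝ → ℝ := fun s => Real.exp (-G0 s - GS s) with hE
    have hcE : Continuous E := (hcG0.neg.sub hcGS).rexp
    have step1 : cif lamS lam0 lam1 t
        = (∫ s in (0:ℝ)..t, E s * g0 s)
          + ∫ s in (0:ℝ)..t, E s * gS s * (1 - Real.exp (-(G1 s))) := by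
      unfold cif
      congr 1
      · apply intervalIntegral.integral_congr
        intro s hs
        rw [Set.uIcc_of_le ht] at hs
        show Real.exp (-cumHaz lam0 s - cumHaz lamS s) * lam0 s = E s * g0 s
        rw [hcum_eq lam0 g0 hdef s hs.1, hcum_eq lamS gS (fun u => rfl) s hs.1,
          hdef s, max_eq_left hs.1]
      · apply intervalIntegral.integral_congr
        intro s hs
        rw [Set.uIcc_of_le ht] at hs
        show Real.exp (-cumHaz lam0 s - cumHaz lamS s) * lamS s * (1 - Real.exp (-cumHaz1 lam1 t s))
          = E s * gS s * (1 - Real.exp (-(G1 s)))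
        rw [hcum_eq lam0 g0 hdef s hs.1, hcum_eq lamS gS (fun u => rfl) s hs.1,
          hG1_eq s hs.1 hs.2]
        show _ * lamS s * _ = _ * gS s * _
        rw [hgS]
        simp only [max_eq_left hs.1]
        rfl
    have hiES : IntervalIntegrable (fun s => E s * gS s) volume 0 t :=
      (hcE.mul hcgS).intervalIntegrable _ _
    have hiE1 : IntervalIntegrable (fun s => E s * gS s * Real.exp (-(G1 s))) volume 0 t :=
      ((hcE.mul hcgS).mul hcG1.neg.rexp).intervalIntegrable _ _
    have step2 : (∫ s in (0:ℝ)..t, E s * g0 s)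
        = (1 - E t) - ∫ s in (0:ℝ)..t, E s * gS s := by
      have := survival_integral g0 gS hcg0 hcgS t
      have hsplit : (∫ s in (0:ℝ)..t, E s * (g0 s + gS s))
          = (∫ s in (0:ℝ)..t, E s * g0 s) + ∫ s in (0:ℝ)..t, E s * gS s := by
        rw [← intervalIntegral.integral_add (f := fun s => E s * g0 s)
          ((hcE.mul hcg0).intervalIntegrable _ _) hiES]
        apply intervalIntegral.integral_congr
        intro s _; ring
      have hEt : E t = Real.exp (-(∫ u in (0:ℝ)..t, g0 u) - ∫ u in (0:ℝ)..t, gS u) := rfl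
      rw [hEt]
      linarith [this, hsplit]
    have step3 : (∫ s in (0:ℝ)..t, E s * gS s * (1 - Real.exp (-(G1 s))))
        = (∫ s in (0:ℝ)..t, E s * gS s)
          - ∫ s in (0:ℝ)..t, E s * gS s * Real.exp (-(G1 s)) := by
      rw [← intervalIntegral.integral_sub hiES hiE1]
      apply intervalIntegral.integral_congr
      intro s _; ring
    rw [step1, step2, step3]
    have : E t = Real.exp (-(∫ u in (0:ℝ)..t, g0 u) - GS t) := rfl
    rw [this]
    have : ∀ s, Real.exp (-(∫ u in (0:ℝ)..s, g0 u) - GS s) = E s := fun s => rfl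
    simp only [this]
    ring
  rw [key lam0a ga hcga fun u => rfl, key lam0b gb hcgb fun u => rfl]
  -- comparisons
  have hGle : ∀ s : ℝ, 0 ≤ s → (∫ u in (0:ℝ)..s, ga u) ≤ ∫ u in (0:ℝ)..s, gb u := by
    intro s hs
    apply intervalIntegral.integral_mono_on hs (hcga.intervalIntegrable _ _)
      (hcgb.intervalIntegrable _ _)
    intro u _
    exact hle _ (hmem u)
  have hEle : ∀ s : ℝ, 0 ≤ s →
      Real.exp (-(∫ u in (0:ℝ)..s, gb u) - GS s) ≤ Real.exp (-(∫ u in (0:ℝ)..s, ga u) - GS s) := by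
    intro s hs
    apply Real.exp_le_exp.2
    have := hGle s hs
    linarith
  have hIle : (∫ s in (0:ℝ)..t, Real.exp (-(∫ u in (0:ℝ)..s, gb u) - GS s) * gS s * Real.exp (-(G1 s)))
      ≤ ∫ s in (0:ℝ)..t, Real.exp (-(∫ u in (0:ℝ)..s, ga u) - GS s) * gS s * Real.exp (-(G1 s)) := by
    apply intervalIntegral.integral_mono_on ht
      (((((primitive_continuous gb hcgb).neg.sub hcGS).rexp.mul hcgS).mul hcG1.neg.rexp).intervalIntegrable _ _)
      (((((primitive_continuous ga hcga).neg.sub hcGS).rexp.mul hcgS).mul hcG1.neg.rexp).intervalIntegrable _ _)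
    intro s hs
    have h1 : 0 ≤ gS s := hSnn _ (hmem s)
    have h2 : 0 ≤ Real.exp (-(G1 s)) := (Real.exp_pos _).le
    have := hEle s hs.1
    apply mul_le_mul_of_nonneg_right _ h2
    exact mul_le_mul_of_nonneg_right this h1
  linarith [hEle t ht]
end

section
/- Identification of the counterfactual cumulative incidence function in the absence of time-varying confounders (Theorem 1, no-confounder case): in the latent-time construction, for every t ≥ 0 the distribution function of the terminal event time equals the identification formula, P(T₂ ≤ t) = F(t) = ∫₀ᵗ exp{−Λ₀(s)−Λ⋆(s)} λ₀(s) ds + ∫₀ᵗ exp{−Λ₀(s)−Λ⋆(s)} λ⋆(s) (1 − exp{−Λ₁(t,s)}) ds. In particular, when the three hazards are taken from treatment-indexed triples, the counterfactual cumulative incidence F(t;z,z) built with hazards all under treatment z coincides with the natural cumulative incidence F(t;z) of the terminal event under treatment z. -/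
open MeasureTheory ProbabilityTheory Filter Set

open Topology
lemma li_cumHaz_zero (lam : ℝ → ℝ) : cumHaz lam 0 = 0 := intervalIntegral.integral_same

lemma li_intInt {lam : ℝ → ℝ} (hc : ContinuousOn lam (Set.Ici 0)) {a b : ℝ}
    (ha : 0 ≤ a) (hb : 0 ≤ b) : IntervalIntegrable lam volume a b := by
  apply (hc.mono ?_).intervalIntegrable
  intro x hx
  exact le_trans (le_inf ha hb) hx.1

lemma li_cumHaz_nonneg {lam : ℝ → ℝ} (hnn : ∀ u ∈ Set.Ici (0:ℝ), 0 ≤ lam u)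
    {s : ℝ} (hs : 0 ≤ s) : 0 ≤ cumHaz lam s :=
  intervalIntegral.integral_nonneg hs (fun u hu => hnn u hu.1)

lemma li_cumHaz_add {lam : ℝ → ℝ} (hc : ContinuousOn lam (Set.Ici 0)) {a b : ℝ}
    (ha : 0 ≤ a) (hb : 0 ≤ b) :
    cumHaz lam b = cumHaz lam a + ∫ u in a..b, lam u :=
  (intervalIntegral.integral_add_adjacent_intervals (li_intInt hc le_rfl ha)
    (li_intInt hc ha hb)).symm

lemma li_cumHaz_strictMonoOn {lam : ℝ → ℝ} (hc : ContinuousOn lam (Set.Ici 0))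
    (hpos : ∀ u ∈ Set.Ici (0:ℝ), 0 < lam u) :
    StrictMonoOn (cumHaz lam) (Set.Ici 0) := by
  intro a ha b hb hab
  rw [li_cumHaz_add hc ha hb]
  have : 0 < ∫ u in a..b, lam u :=
    intervalIntegral.intervalIntegral_pos_of_pos_on (li_intInt hc ha hb)
      (fun x hx => hpos x (le_trans ha hx.1.le)) hab
  linarith

lemma li_cumHaz_continuousOn {lam : ℝ → ℝ} (hc : ContinuousOn lam (Set.Ici 0)) :
    ContinuousOn (cumHaz lam) (Set.Ici 0) := by
  intro x hx
  have hx0 : (0:ℝ) ≤ x := hx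
  have h := intervalIntegral.continuousWithinAt_primitive (μ := volume)
    (f := lam) (a := 0) (b₀ := x) (b₁ := 0) (b₂ := x + 1) (measure_singleton x) ?_
  · have h2 : Set.Iio (x+1) ∈ 𝓝 x := Iio_mem_nhds (by linarith)
    have hmem : Set.Icc 0 (x+1) ∈ 𝓝[Set.Ici 0] x := by
      refine Filter.mem_of_superset (Filter.inter_mem self_mem_nhdsWithin
        (mem_nhdsWithin_of_mem_nhds h2)) ?_
      rintro y ⟨hy1, hy2⟩
      exact ⟨hy1, le_of_lt hy2⟩
    exact h.mono_of_mem_nhdsWithin hmem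
  · exact li_intInt hc (le_min le_rfl le_rfl) (le_max_left _ _)

lemma li_hasDerivAt {lam : ℝ → ℝ} (hc : ContinuousOn lam (Set.Ici 0)) {x : ℝ}
    (hx : 0 < x) : HasDerivAt (cumHaz lam) (lam x) x := by
  refine intervalIntegral.integral_hasDerivAt_right (li_intInt hc le_rfl hx.le) ?_ ?_
  · exact (hc.mono (Ioi_subset_Ici le_rfl)).stronglyMeasurableAtFilter isOpen_Ioi _ hx
  · exact hc.continuousAt (Ici_mem_nhds hx)

lemma li_integral_density {lam : ℝ → ℝ} (hc : ContinuousOn lam (Set.Ici 0)) {x : ℝ}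
    (hx : 0 ≤ x) :
    ∫ s in (0:ℝ)..x, lam s * Real.exp (-cumHaz lam s) = 1 - Real.exp (-cumHaz lam x) := by
  have hcont : ContinuousOn (fun s => -Real.exp (-cumHaz lam s)) (Set.Icc 0 x) := by
    apply ContinuousOn.neg
    exact (Real.continuous_exp.comp_continuousOn
      ((li_cumHaz_continuousOn hc).mono Icc_subset_Ici_self).neg)
  have hderiv : ∀ y ∈ Set.Ioo 0 x, HasDerivWithinAt (fun s => -Real.exp (-cumHaz lam s))
      (lam y * Real.exp (-cumHaz lam y)) (Set.Ioi y) y := by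
    intro y hy
    have h1 := ((li_hasDerivAt hc hy.1).neg.exp).neg
    have : Real.exp (-cumHaz lam y) * -lam y = -(lam y * Real.exp (-cumHaz lam y)) := by ring
    simp only [Pi.neg_apply] at h1
    rw [this] at h1
    rw [neg_neg] at h1
    exact h1.hasDerivWithinAt
  have hint : IntervalIntegrable (fun s => lam s * Real.exp (-cumHaz lam s)) volume 0 x := by
    apply ContinuousOn.intervalIntegrable
    rw [uIcc_of_le hx]
    exact (hc.mono Icc_subset_Ici_self).mul (Real.continuous_exp.comp_continuousOn
      ((li_cumHaz_continuousOn hc).mono Icc_subset_Ici_self).neg)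
  have := intervalIntegral.integral_eq_sub_of_hasDeriv_right_of_le hx hcont hderiv hint
  rw [this, li_cumHaz_zero]
  simp
  ring

lemma li_expIic {x : ℝ} (hx : 0 ≤ x) :
    expMeasure 1 (Set.Iic x) = ENNReal.ofReal (1 - Real.exp (-x)) := by
  rw [expMeasure, gammaMeasure, withDensity_apply _ measurableSet_Iic]
  have : ∀ y, gammaPDF 1 1 y = exponentialPDF 1 y := fun y => rfl
  simp_rw [this]
  rw [lintegral_exponentialPDF_eq_antiDeriv one_pos x, if_pos hx, one_mul]

lemma li_expIoi {x : ℝ} (hx : 0 ≤ x) :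
    expMeasure 1 (Set.Ioi x) = ENNReal.ofReal (Real.exp (-x)) := by
  have hP : IsProbabilityMeasure (expMeasure 1) := isProbabilityMeasure_expMeasure one_pos
  have h1 : Set.Ioi x = (Set.Iic x)ᶜ := Set.compl_Iic.symm
  rw [h1, measure_compl measurableSet_Iic (measure_ne_top _ _), li_expIic hx, measure_univ]
  rw [← ENNReal.ofReal_one, ← ENNReal.ofReal_sub _ (by
    have := Real.exp_le_one_iff.2 (neg_nonpos.2 hx)
    linarith)]
  norm_num

/-- FTC step: `∫₀ᵗ (λ₀ e^{-Λ₀} e^{-Λ⋆} - λ⋆ e^{-Λ⋆} (1 - e^{-Λ₀})) = (1-e^{-Λ₀ t}) e^{-Λ⋆ t}`. -/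
lemma li_ftc2 {lamS lam0 : ℝ → ℝ} (hS : ContinuousOn lamS (Set.Ici 0))
    (h0 : ContinuousOn lam0 (Set.Ici 0)) {t : ℝ} (ht : 0 ≤ t) :
    ∫ s in (0:ℝ)..t, (lam0 s * Real.exp (-cumHaz lam0 s) * Real.exp (-cumHaz lamS s)
      - lamS s * Real.exp (-cumHaz lamS s) * (1 - Real.exp (-cumHaz lam0 s)))
    = (1 - Real.exp (-cumHaz lam0 t)) * Real.exp (-cumHaz lamS t) := by
  have hc0 : ContinuousOn (fun s => Real.exp (-cumHaz lam0 s)) (Set.Icc 0 t) :=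
    Real.continuous_exp.comp_continuousOn
      ((li_cumHaz_continuousOn h0).mono Icc_subset_Ici_self).neg
  have hcS : ContinuousOn (fun s => Real.exp (-cumHaz lamS s)) (Set.Icc 0 t) :=
    Real.continuous_exp.comp_continuousOn
      ((li_cumHaz_continuousOn hS).mono Icc_subset_Ici_self).neg
  have hcont : ContinuousOn
      (fun s => (1 - Real.exp (-cumHaz lam0 s)) * Real.exp (-cumHaz lamS s)) (Set.Icc 0 t) :=
    (continuousOn_const.sub hc0).mul hcS
  have hderiv : ∀ y ∈ Set.Ioo 0 t, HasDerivWithinAt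
      (fun s => (1 - Real.exp (-cumHaz lam0 s)) * Real.exp (-cumHaz lamS s))
      (lam0 y * Real.exp (-cumHaz lam0 y) * Real.exp (-cumHaz lamS y)
        - lamS y * Real.exp (-cumHaz lamS y) * (1 - Real.exp (-cumHaz lam0 y)))
      (Set.Ioi y) y := by
    intro y hy
    have h0' := ((li_hasDerivAt h0 hy.1).neg.exp).const_sub 1
    have hS' := (li_hasDerivAt hS hy.1).neg.exp
    have := h0'.mul hS'
    have heq : -(Real.exp (-cumHaz lam0 y) * -lam0 y) * Real.exp (-cumHaz lamS y)
        + (1 - Real.exp (-cumHaz lam0 y)) * (Real.exp (-cumHaz lamS y) * -lamS y)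
        = lam0 y * Real.exp (-cumHaz lam0 y) * Real.exp (-cumHaz lamS y)
        - lamS y * Real.exp (-cumHaz lamS y) * (1 - Real.exp (-cumHaz lam0 y)) := by ring
    simp only [Pi.neg_apply] at this
    rw [heq] at this
    exact this.hasDerivWithinAt
  have hcS' : ContinuousOn lamS (Set.Icc 0 t) := hS.mono Icc_subset_Ici_self
  have hc0' : ContinuousOn lam0 (Set.Icc 0 t) := h0.mono Icc_subset_Ici_self
  have hint : IntervalIntegrable (fun s =>
      lam0 s * Real.exp (-cumHaz lam0 s) * Real.exp (-cumHaz lamS s)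
      - lamS s * Real.exp (-cumHaz lamS s) * (1 - Real.exp (-cumHaz lam0 s))) volume 0 t := by
    apply ContinuousOn.intervalIntegrable
    rw [uIcc_of_le ht]
    exact ((hc0'.mul hc0).mul hcS).sub ((hcS'.mul hcS).mul (continuousOn_const.sub hc0))
  have := intervalIntegral.integral_eq_sub_of_hasDeriv_right_of_le ht hcont hderiv hint
  rw [this, li_cumHaz_zero]
  simp

lemma li_final {lamS lam0 : ℝ → ℝ} (lam1 : ℝ → ℝ → ℝ)
    (hS : ContinuousOn lamS (Set.Ici 0)) (h0 : ContinuousOn lam0 (Set.Ici 0)) {t : ℝ}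
    (ht : 0 ≤ t)
    (hI : IntervalIntegrable (fun s => lamS s * Real.exp (-cumHaz lamS s) *
      ((1 - Real.exp (-cumHaz lam0 s)) + Real.exp (-cumHaz lam0 s) *
        (1 - Real.exp (-cumHaz1 lam1 t s)))) volume 0 t) :
    (∫ s in (0:ℝ)..t, lamS s * Real.exp (-cumHaz lamS s) *
      ((1 - Real.exp (-cumHaz lam0 s)) + Real.exp (-cumHaz lam0 s) *
        (1 - Real.exp (-cumHaz1 lam1 t s))))
    + Real.exp (-cumHaz lamS t) * (1 - Real.exp (-cumHaz lam0 t))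
    = cif lamS lam0 lam1 t := by
  have hexp : ∀ s : ℝ, Real.exp (-cumHaz lam0 s - cumHaz lamS s)
      = Real.exp (-cumHaz lam0 s) * Real.exp (-cumHaz lamS s) := by
    intro s
    rw [← Real.exp_add]
    ring_nf
  have hA : IntervalIntegrable
      (fun s => lamS s * Real.exp (-cumHaz lamS s) * (1 - Real.exp (-cumHaz lam0 s)))
      volume 0 t := by
    apply ContinuousOn.intervalIntegrable
    rw [uIcc_of_le ht]
    refine ((hS.mono Icc_subset_Ici_self).mul ?_).mul (continuousOn_const.sub ?_) <;>
      exact Real.continuous_exp.comp_continuousOn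
        ((li_cumHaz_continuousOn (by assumption)).mono Icc_subset_Ici_self).neg
  have hB : IntervalIntegrable (fun s => lamS s * Real.exp (-cumHaz lamS s) *
      ((1 - Real.exp (-cumHaz lam0 s)) + Real.exp (-cumHaz lam0 s) *
        (1 - Real.exp (-cumHaz1 lam1 t s)))
      - lamS s * Real.exp (-cumHaz lamS s) * (1 - Real.exp (-cumHaz lam0 s))) volume 0 t :=
    hI.sub hA
  have hsplit : (∫ s in (0:ℝ)..t, lamS s * Real.exp (-cumHaz lamS s) *
      ((1 - Real.exp (-cumHaz lam0 s)) + Real.exp (-cumHaz lam0 s) *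
        (1 - Real.exp (-cumHaz1 lam1 t s))))
      = (∫ s in (0:ℝ)..t, lamS s * Real.exp (-cumHaz lamS s) * (1 - Real.exp (-cumHaz lam0 s)))
      + ∫ s in (0:ℝ)..t, Real.exp (-cumHaz lam0 s - cumHaz lamS s) * lamS s *
          (1 - Real.exp (-cumHaz1 lam1 t s)) := by
    have e1 : (∫ s in (0:ℝ)..t, Real.exp (-cumHaz lam0 s - cumHaz lamS s) * lamS s *
          (1 - Real.exp (-cumHaz1 lam1 t s)))
        = ∫ s in (0:ℝ)..t, (lamS s * Real.exp (-cumHaz lamS s) *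
          ((1 - Real.exp (-cumHaz lam0 s)) + Real.exp (-cumHaz lam0 s) *
            (1 - Real.exp (-cumHaz1 lam1 t s)))
          - lamS s * Real.exp (-cumHaz lamS s) * (1 - Real.exp (-cumHaz lam0 s))) := by
      apply intervalIntegral.integral_congr
      intro s _
      dsimp only
      rw [hexp s]
      ring
    rw [e1, ← intervalIntegral.integral_add hA hB]
    apply intervalIntegral.integral_congr
    intro s _
    dsimp only
    ring
  have hftc := li_ftc2 hS h0 ht
  have hC : IntervalIntegrable (fun s =>
      lam0 s * Real.exp (-cumHaz lam0 s) * Real.exp (-cumHaz lamS s)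
      - lamS s * Real.exp (-cumHaz lamS s) * (1 - Real.exp (-cumHaz lam0 s))) volume 0 t := by
    apply ContinuousOn.intervalIntegrable
    rw [uIcc_of_le ht]
    have hc0 : ContinuousOn (fun s => Real.exp (-cumHaz lam0 s)) (Set.Icc 0 t) :=
      Real.continuous_exp.comp_continuousOn
        ((li_cumHaz_continuousOn h0).mono Icc_subset_Ici_self).neg
    have hcS : ContinuousOn (fun s => Real.exp (-cumHaz lamS s)) (Set.Icc 0 t) :=
      Real.continuous_exp.comp_continuousOn
        ((li_cumHaz_continuousOn hS).mono Icc_subset_Ici_self).neg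
    exact (((h0.mono Icc_subset_Ici_self).mul hc0).mul hcS).sub
      (((hS.mono Icc_subset_Ici_self).mul hcS).mul (continuousOn_const.sub hc0))
  have hsub : (∫ s in (0:ℝ)..t, Real.exp (-cumHaz lam0 s - cumHaz lamS s) * lam0 s)
      = (∫ s in (0:ℝ)..t, lamS s * Real.exp (-cumHaz lamS s) * (1 - Real.exp (-cumHaz lam0 s)))
      + (1 - Real.exp (-cumHaz lam0 t)) * Real.exp (-cumHaz lamS t) := by
    have e2 : (∫ s in (0:ℝ)..t, Real.exp (-cumHaz lam0 s - cumHaz lamS s) * lam0 s)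
        = ∫ s in (0:ℝ)..t, (lamS s * Real.exp (-cumHaz lamS s) * (1 - Real.exp (-cumHaz lam0 s))
          + (lam0 s * Real.exp (-cumHaz lam0 s) * Real.exp (-cumHaz lamS s)
            - lamS s * Real.exp (-cumHaz lamS s) * (1 - Real.exp (-cumHaz lam0 s)))) := by
      apply intervalIntegral.integral_congr
      intro s _
      dsimp only
      rw [hexp s]
      ring
    rw [e2, intervalIntegral.integral_add hA hC, hftc]
  rw [cif, hsplit, hsub]
  ring

/-- identification of the counterfactual cumulative incidence function
in the absence of time-varying confounders: in the latent-time construction,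
`P(T₂ ≤ t) = F(t)` for every `t ≥ 0`. -/
theorem latent_identification
    {Ω : Type*} [MeasurableSpace Ω] (P : Measure Ω) [IsProbabilityMeasure P]
    (lamS lam0 : ℝ → ℝ) (lam1 : ℝ → ℝ → ℝ)
    (hScont : ContinuousOn lamS (Set.Ici 0))
    (h0cont : ContinuousOn lam0 (Set.Ici 0))
    (h1cont : ContinuousOn (fun p : ℝ × ℝ => lam1 p.1 p.2) {p : ℝ × ℝ | 0 ≤ p.2 ∧ p.2 ≤ p.1})
    (hSpos : ∀ t ∈ Set.Ici (0:ℝ), 0 < lamS t)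
    (h0pos : ∀ t ∈ Set.Ici (0:ℝ), 0 < lam0 t)
    (h1nn : ∀ s t : ℝ, 0 ≤ s → s ≤ t → 0 ≤ lam1 t s)
    (hStop : Tendsto (cumHaz lamS) atTop atTop)
    (h0top : Tendsto (cumHaz lam0) atTop atTop)
    (h1mono : ∀ s : ℝ, 0 ≤ s → StrictMonoOn (fun t => cumHaz1 lam1 t s) (Set.Ici s))
    (h1top : ∀ s : ℝ, 0 ≤ s → Tendsto (fun t => cumHaz1 lam1 t s) atTop atTop)
    (E1 E2 E3 : Ω → ℝ)
    (hE1m : Measurable E1) (hE2m : Measurable E2) (hE3m : Measurable E3)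
    (hindep : iIndepFun ![E1, E2, E3] P)
    (hE1d : P.map E1 = expMeasure 1)
    (hE2d : P.map E2 = expMeasure 1)
    (hE3d : P.map E3 = expMeasure 1)
    (T1 D0 T2 : Ω → ℝ)
    (hT1 : ∀ ω, 0 ≤ T1 ω ∧ cumHaz lamS (T1 ω) = E1 ω)
    (hD0 : ∀ ω, 0 ≤ D0 ω ∧ cumHaz lam0 (D0 ω) = E2 ω)
    (hT2a : ∀ ω, D0 ω ≤ T1 ω → T2 ω = D0 ω)
    (hT2b : ∀ ω, T1 ω < D0 ω → T1 ω ≤ T2 ω ∧ cumHaz1 lam1 (T2 ω) (T1 ω) = E3 ω)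
    :
    ∀ t : ℝ, 0 ≤ t →
      P {ω | T2 ω ≤ t} = ENNReal.ofReal (cif lamS lam0 lam1 t) := by
  intro t ht
  -- basic monotonicity / continuity facts
  have hSm := li_cumHaz_strictMonoOn hScont hSpos
  have h0m := li_cumHaz_strictMonoOn h0cont h0pos
  have hSnn : ∀ {s : ℝ}, 0 ≤ s → 0 ≤ cumHaz lamS s :=
    fun hs => li_cumHaz_nonneg (fun u hu => (hSpos u hu).le) hs
  have h0nn : ∀ {s : ℝ}, 0 ≤ s → 0 ≤ cumHaz lam0 s :=
    fun hs => li_cumHaz_nonneg (fun u hu => (h0pos u hu).le) hs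
  have h1cumnn : ∀ {s : ℝ}, 0 ≤ s → s ≤ t → 0 ≤ cumHaz1 lam1 t s := by
    intro s hs hst
    exact intervalIntegral.integral_nonneg hst (fun u hu => h1nn s u hs hu.1)
  -- the inverse of the cumulative hazard, and measurability of T1
  have hinv_mono : Monotone (fun x : ℝ => sInf {u : ℝ | 0 ≤ u ∧ x ≤ cumHaz lamS u}) := by
    intro x y hxy
    apply csInf_le_csInf ⟨0, fun u hu => hu.1⟩
    · obtain ⟨u, hu1, hu2⟩ := ((hStop.eventually_ge_atTop y).and (eventually_ge_atTop 0)).exists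
      exact ⟨u, hu2, hu1⟩
    · exact fun u hu => ⟨hu.1, hxy.trans hu.2⟩
  have hinv_eq : ∀ a : ℝ, 0 ≤ a →
      (fun x : ℝ => sInf {u : ℝ | 0 ≤ u ∧ x ≤ cumHaz lamS u}) (cumHaz lamS a) = a := by
    intro a ha
    have hset : {u : ℝ | 0 ≤ u ∧ cumHaz lamS a ≤ cumHaz lamS u} = Set.Ici a := by
      ext u
      constructor
      · rintro ⟨hu0, hu⟩
        simp only [Set.mem_Ici]
        by_contra hcon
        push_neg at hcon
        exact absurd hu (not_le.2 (hSm hu0 ha hcon))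
      · intro hu
        exact ⟨ha.trans hu, hSm.monotoneOn ha (ha.trans hu) hu⟩
    simp only [hset, csInf_Ici]
  have hT1eq : T1 = fun ω => sInf {u : ℝ | 0 ≤ u ∧ E1 ω ≤ cumHaz lamS u} := by
    funext ω
    rw [← (hT1 ω).2]
    exact (hinv_eq _ (hT1 ω).1).symm
  have hT1m : Measurable T1 := by
    rw [hT1eq]
    exact hinv_mono.measurable.comp hE1m
  -- continuous auxiliary functions
  have hmaxS : Continuous (fun s : ℝ => cumHaz lamS (max s 0)) :=
    (li_cumHaz_continuousOn hScont).comp_continuous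
      (continuous_id.max continuous_const) (fun x => Set.mem_Ici.2 (le_max_right _ _))
  have hmax0 : Continuous (fun s : ℝ => cumHaz lam0 (max s 0)) :=
    (li_cumHaz_continuousOn h0cont).comp_continuous
      (continuous_id.max continuous_const) (fun x => Set.mem_Ici.2 (le_max_right _ _))
  have hmaxlamS : Continuous (fun s : ℝ => lamS (max s 0)) :=
    hScont.comp_continuous (continuous_id.max continuous_const) (fun x => Set.mem_Ici.2 (le_max_right _ _))
  -- measurable version of `lam1` and of `s ↦ Λ₁(t,s)`
  have hSclosed : IsClosed {p : ℝ × ℝ | 0 ≤ p.2 ∧ p.2 ≤ p.1} :=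
    (isClosed_le continuous_const continuous_snd).inter
      (isClosed_le continuous_snd continuous_fst)
  have hrcont : Continuous (fun p : ℝ × ℝ => (max p.1 (max p.2 0), max p.2 0)) :=
    (continuous_fst.max (continuous_snd.max continuous_const)).prodMk
      (continuous_snd.max continuous_const)
  have hrmem : ∀ p : ℝ × ℝ, (max p.1 (max p.2 0), max p.2 0) ∈
      {p : ℝ × ℝ | 0 ≤ p.2 ∧ p.2 ≤ p.1} :=
    fun p => ⟨le_max_right _ _, le_max_right _ _⟩
  set F : ℝ × ℝ → ℝ := fun p => lam1 (max p.1 (max p.2 0)) (max p.2 0) with hF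
  have hFcont : Continuous F := h1cont.comp_continuous hrcont hrmem
  have hFeq : ∀ u s : ℝ, 0 ≤ s → s ≤ u → F (u, s) = lam1 u s := by
    intro u s h0 hsu
    simp only [hF]
    rw [max_eq_left h0, max_eq_left hsu]
  set L1m : ℝ → ℝ := fun s => ∫ u, Set.indicator {q : ℝ × ℝ | q.1 < q.2 ∧ q.2 ≤ t}
      (fun q => F (q.2, q.1)) (s, u) with hL1m
  have hL1meas : Measurable L1m := by
    have hGmeas : StronglyMeasurable (Set.indicator {q : ℝ × ℝ | q.1 < q.2 ∧ q.2 ≤ t}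
        (fun q : ℝ × ℝ => F (q.2, q.1))) := by
      apply Measurable.stronglyMeasurable
      exact Measurable.indicator
        (hFcont.comp (continuous_snd.prodMk continuous_fst)).measurable
        ((measurableSet_lt measurable_fst measurable_snd).inter
          (measurableSet_le measurable_snd measurable_const))
    exact hGmeas.integral_prod_right'.measurable
  have hL1eq : ∀ s : ℝ, 0 ≤ s → s ≤ t → L1m s = cumHaz1 lam1 t s := by
    intro s h0 hst
    have e1 : ∀ u : ℝ, Set.indicator {q : ℝ × ℝ | q.1 < q.2 ∧ q.2 ≤ t}
        (fun q : ℝ × ℝ => F (q.2, q.1)) (s, u)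
        = Set.indicator (Set.Ioc s t) (fun u => F (u, s)) u := by
      intro u
      by_cases h : u ∈ Set.Ioc s t
      · rw [Set.indicator_of_mem h, Set.indicator_of_mem (by exact ⟨h.1, h.2⟩)]
      · rw [Set.indicator_of_notMem h, Set.indicator_of_notMem (by
          intro hc
          exact h ⟨hc.1, hc.2⟩)]
    rw [hL1m]
    simp only [e1]
    rw [MeasureTheory.integral_indicator measurableSet_Ioc]
    rw [show cumHaz1 lam1 t s = ∫ u in Set.Ioc s t, lam1 u s from by
      rw [cumHaz1, intervalIntegral.integral_of_le hst]]
    apply setIntegral_congr_fun measurableSet_Ioc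
    intro u hu
    exact hFeq u s h0 hu.1.le
  -- the density of T1
  set rho : ℝ → ENNReal := fun s => Set.indicator (Set.Ioi (0:ℝ))
      (fun s => ENNReal.ofReal (lamS (max s 0) * Real.exp (-cumHaz lamS (max s 0)))) s
      with hrho
  have hrhom : Measurable rho :=
    Measurable.indicator
      ((hmaxlamS.mul (Real.continuous_exp.comp hmaxS.neg)).measurable).ennreal_ofReal
      measurableSet_Ioi
  have hIntS : ∀ {x : ℝ}, 0 ≤ x →
      IntegrableOn (fun s => lamS s * Real.exp (-cumHaz lamS s)) (Set.Ioc 0 x) volume := by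
    intro x hx
    have : ContinuousOn (fun s => lamS s * Real.exp (-cumHaz lamS s)) (Set.Icc 0 x) :=
      (hScont.mono Icc_subset_Ici_self).mul (Real.continuous_exp.comp_continuousOn
        ((li_cumHaz_continuousOn hScont).mono Icc_subset_Ici_self).neg)
    exact (this.integrableOn_compact isCompact_Icc).mono_set Ioc_subset_Icc_self
  have hnuIic : ∀ x : ℝ, (volume.withDensity rho) (Set.Iic x)
      = ENNReal.ofReal (if 0 ≤ x then 1 - Real.exp (-cumHaz lamS x) else 0) := by
    intro x
    rw [withDensity_apply _ measurableSet_Iic]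
    by_cases hx : 0 ≤ x
    · rw [if_pos hx, ← Set.Iic_union_Ioc_eq_Iic hx,
        lintegral_union measurableSet_Ioc (Set.Iic_disjoint_Ioc le_rfl)]
      have h1 : ∫⁻ s in Set.Iic (0:ℝ), rho s = 0 := by
        rw [setLIntegral_congr_fun measurableSet_Iic ((fun s hs =>
          Set.indicator_of_notMem (by simpa using hs) _))]
        simp
      have h2 : ∫⁻ s in Set.Ioc (0:ℝ) x, rho s
          = ENNReal.ofReal (∫ s in Set.Ioc (0:ℝ) x, lamS s * Real.exp (-cumHaz lamS s)) := by
        have e : ∀ s ∈ Set.Ioc (0:ℝ) x,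
            rho s = ENNReal.ofReal (lamS s * Real.exp (-cumHaz lamS s)) := by
          intro s hs
          simp only [hrho]
          rw [Set.indicator_of_mem (Set.mem_Ioi.2 hs.1), max_eq_left hs.1.le]
        rw [setLIntegral_congr_fun measurableSet_Ioc (e),
          ← ofReal_integral_eq_lintegral_ofReal (hIntS hx)
          ((ae_restrict_iff' measurableSet_Ioc).2 (ae_of_all _ (fun s hs =>
            mul_nonneg (hSpos s hs.1.le).le (Real.exp_nonneg _))))]
      rw [h1, h2, zero_add, ← intervalIntegral.integral_of_le hx,
        li_integral_density hScont hx]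
    · rw [if_neg hx]
      rw [setLIntegral_congr_fun measurableSet_Iic ((fun s hs =>
        Set.indicator_of_notMem (by
          simp only [Set.mem_Ioi, not_lt]
          push_neg at hx
          exact le_of_lt (lt_of_le_of_lt hs hx)) _))]
      simp
  have hnufin : IsFiniteMeasure (volume.withDensity rho) := by
    constructor
    have hU : ⋃ n : ℕ, Set.Iic ((n : ℝ)) = Set.univ := by
      ext y
      simp only [Set.mem_iUnion, Set.mem_Iic, Set.mem_univ, iff_true]
      exact exists_nat_ge y
    have hmono : Monotone fun n : ℕ => Set.Iic ((n:ℝ)) :=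
      fun i j hij => Set.Iic_subset_Iic.2 (Nat.cast_le.2 hij)
    rw [← hU, hmono.directed_le.measure_iUnion]
    refine lt_of_le_of_lt (iSup_le fun n => ?_) (by norm_num : (1:ENNReal) < ⊤)
    rw [hnuIic]
    refine ENNReal.ofReal_le_one.2 ?_
    split_ifs
    · have := Real.exp_nonneg (-cumHaz lamS (n:ℝ))
      linarith
    · norm_num
  have hlaw1 : P.map T1 = volume.withDensity rho := by
    haveI := hnufin
    haveI : IsProbabilityMeasure (P.map T1) := Measure.isProbabilityMeasure_map hT1m.aemeasurable
    refine Measure.ext_of_Iic _ _ (fun x => ?_)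
    rw [Measure.map_apply hT1m measurableSet_Iic, hnuIic]
    by_cases hx : 0 ≤ x
    · rw [if_pos hx]
      have hpre : T1 ⁻¹' Set.Iic x = E1 ⁻¹' Set.Iic (cumHaz lamS x) := by
        ext ω
        simp only [Set.mem_preimage, Set.mem_Iic]
        constructor
        · intro h
          rw [← (hT1 ω).2]
          exact hSm.monotoneOn (hT1 ω).1 hx h
        · intro h
          by_contra hcon
          push_neg at hcon
          rw [← (hT1 ω).2] at h
          exact absurd h (not_le.2 (hSm hx (hT1 ω).1 hcon))
      rw [hpre, ← Measure.map_apply hE1m measurableSet_Iic, hE1d, li_expIic (hSnn hx)]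
    · rw [if_neg hx]
      have hpre : T1 ⁻¹' Set.Iic x = ∅ := by
        ext ω
        simp only [Set.mem_preimage, Set.mem_Iic, Set.mem_empty_iff_false, iff_false, not_le]
        push_neg at hx
        exact lt_of_lt_of_le hx (hT1 ω).1
      simp [hpre]
  -- joint law of (T1, (E2, E3))
  haveI hPexp : IsProbabilityMeasure (expMeasure 1) := isProbabilityMeasure_expMeasure one_pos
  have hmeasvec : ∀ i, Measurable (![E1, E2, E3] i) := by
    intro i
    fin_cases i <;> assumption
  have hpairm : Measurable (fun ω => (E2 ω, E3 ω)) := hE2m.prodMk hE3m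
  have hXm : Measurable (fun ω => (T1 ω, (E2 ω, E3 ω))) := hT1m.prodMk hpairm
  have hI23 : IndepFun E2 E3 P := by
    have := hindep.indepFun (show (1 : Fin 3) ≠ 2 by decide)
    simpa using this
  have hmap23 : P.map (fun ω => (E2 ω, E3 ω)) = (expMeasure 1).prod (expMeasure 1) := by
    rw [(indepFun_iff_map_prod_eq_prod_map_map hE2m.aemeasurable hE3m.aemeasurable).1 hI23,
      hE2d, hE3d]
  have hIpair : IndepFun E1 (fun ω => (E2 ω, E3 ω)) P := by
    have := hindep.indepFun_prodMk hmeasvec 1 2 0 (by decide) (by decide)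
    simpa using this.symm
  have hIT1 : IndepFun T1 (fun ω => (E2 ω, E3 ω)) P := by
    rw [hT1eq]
    exact hIpair.comp hinv_mono.measurable measurable_id
  have hlaw : P.map (fun ω => (T1 ω, (E2 ω, E3 ω)))
      = (volume.withDensity rho).prod ((expMeasure 1).prod (expMeasure 1)) := by
    rw [← hlaw1, ← hmap23]
    exact (indepFun_iff_map_prod_eq_prod_map_map hT1m.aemeasurable hpairm.aemeasurable).1 hIT1
  -- the event as a preimage
  set C : Set (ℝ × ℝ × ℝ) := {p | (p.2.1 ≤ cumHaz lam0 (max p.1 0) ∧ p.2.1 ≤ cumHaz lam0 t)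
      ∨ (cumHaz lam0 (max p.1 0) < p.2.1 ∧ p.1 ≤ t ∧ p.2.2 ≤ L1m p.1)} with hC
  have hCmeas : MeasurableSet C := by
    apply MeasurableSet.union
    · exact (measurableSet_le measurable_snd.fst (hmax0.measurable.comp measurable_fst)).inter
        (measurableSet_le measurable_snd.fst measurable_const)
    · exact ((measurableSet_lt (hmax0.measurable.comp measurable_fst)
        measurable_snd.fst).inter ((measurableSet_le measurable_fst measurable_const).inter
          (measurableSet_le measurable_snd.snd (hL1meas.comp measurable_fst))))
  have hevent : {ω | T2 ω ≤ t} = (fun ω => (T1 ω, (E2 ω, E3 ω))) ⁻¹' C := by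
    ext ω
    obtain ⟨ha, haE⟩ := hT1 ω
    obtain ⟨hd, hdE⟩ := hD0 ω
    simp only [Set.mem_setOf_eq, Set.mem_preimage, hC, max_eq_left ha]
    by_cases hcase : D0 ω ≤ T1 ω
    · rw [hT2a ω hcase]
      constructor
      · intro h
        exact Or.inl ⟨hdE ▸ h0m.monotoneOn hd ha hcase, hdE ▸ h0m.monotoneOn hd ht h⟩
      · rintro (⟨_, h2⟩ | ⟨h1, _, _⟩)
        · by_contra hcon
          push_neg at hcon
          rw [← hdE] at h2
          exact absurd h2 (not_le.2 (h0m ht hd hcon))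
        · rw [← hdE] at h1
          exact absurd (h0m.monotoneOn hd ha hcase) (not_le.2 h1)
    · push_neg at hcase
      obtain ⟨hTT, hTE⟩ := hT2b ω hcase
      have hlt : cumHaz lam0 (T1 ω) < E2 ω := hdE ▸ h0m ha hd hcase
      constructor
      · intro h
        have hT1t : T1 ω ≤ t := le_trans hTT h
        refine Or.inr ⟨hlt, hT1t, ?_⟩
        rw [hL1eq _ ha hT1t, ← hTE]
        exact (h1mono _ ha).monotoneOn hTT hT1t h
      · rintro (⟨h1, _⟩ | ⟨_, h2, h3⟩)
        · exact absurd h1 (not_le.2 hlt)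
        · rw [hL1eq _ ha h2, ← hTE] at h3
          by_contra hcon
          push_neg at hcon
          exact absurd h3 (not_le.2 ((h1mono _ ha) h2 hTT hcon))
  -- reduce to an integral against the law
  rw [hevent, ← Measure.map_apply hXm hCmeas, hlaw, Measure.prod_apply hCmeas]
  have hfib_meas : Measurable
      (fun s => ((expMeasure 1).prod (expMeasure 1)) (Prod.mk s ⁻¹' C)) :=
    measurable_measure_prodMk_left hCmeas
  -- the fibers of the event set
  have hfib1 : ∀ s ∈ Set.Ioc (0:ℝ) t, ((expMeasure 1).prod (expMeasure 1)) (Prod.mk s ⁻¹' C)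
      = ENNReal.ofReal ((1 - Real.exp (-cumHaz lam0 s))
        + Real.exp (-cumHaz lam0 s) * (1 - Real.exp (-cumHaz1 lam1 t s))) := by
    intro s hs
    have hs0 : (0:ℝ) ≤ s := hs.1.le
    have h0st : cumHaz lam0 s ≤ cumHaz lam0 t := h0m.monotoneOn hs0 ht hs.2
    have hsetEq : Prod.mk s ⁻¹' C = (Set.Iic (cumHaz lam0 s) ×ˢ (Set.univ : Set ℝ))
        ∪ (Set.Ioi (cumHaz lam0 s) ×ˢ Set.Iic (L1m s)) := by
      ext q
      simp only [hC, Set.mem_preimage, Set.mem_setOf_eq, Set.mem_union, Set.mem_prod,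
        Set.mem_Iic, Set.mem_Ioi, Set.mem_univ, and_true, max_eq_left hs0]
      constructor
      · rintro (⟨h1, _⟩ | ⟨h1, _, h3⟩)
        · exact Or.inl h1
        · exact Or.inr ⟨h1, h3⟩
      · rintro (h1 | ⟨h1, h2⟩)
        · exact Or.inl ⟨h1, h1.trans h0st⟩
        · exact Or.inr ⟨h1, hs.2, h2⟩
    have hdisj : Disjoint (Set.Iic (cumHaz lam0 s) ×ˢ (Set.univ : Set ℝ))
        (Set.Ioi (cumHaz lam0 s) ×ˢ Set.Iic (L1m s)) := by
      apply Set.disjoint_left.2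
      rintro q ⟨hq1, _⟩ ⟨hq2, _⟩
      exact absurd (Set.mem_Iic.1 hq1) (not_le.2 hq2)
    have hnn1 : 0 ≤ 1 - Real.exp (-cumHaz lam0 s) := by
      have := Real.exp_le_one_iff.2 (neg_nonpos.2 (h0nn hs0))
      linarith
    have hnn2 : 0 ≤ 1 - Real.exp (-cumHaz1 lam1 t s) := by
      have := Real.exp_le_one_iff.2 (neg_nonpos.2 (h1cumnn hs0 hs.2))
      linarith
    rw [hsetEq, measure_union hdisj (measurableSet_Ioi.prod measurableSet_Iic),
      Measure.prod_prod, Measure.prod_prod, measure_univ, mul_one, li_expIic (h0nn hs0),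
      li_expIoi (h0nn hs0), hL1eq s hs0 hs.2, li_expIic (h1cumnn hs0 hs.2),
      ← ENNReal.ofReal_mul (Real.exp_nonneg _),
      ← ENNReal.ofReal_add hnn1 (mul_nonneg (Real.exp_nonneg _) hnn2)]
  have hfib2 : ∀ s ∈ Set.Ioi t, ((expMeasure 1).prod (expMeasure 1)) (Prod.mk s ⁻¹' C)
      = ENNReal.ofReal (1 - Real.exp (-cumHaz lam0 t)) := by
    intro s hs
    have hs0 : (0:ℝ) ≤ s := ht.trans (le_of_lt hs)
    have h0ts : cumHaz lam0 t ≤ cumHaz lam0 s := h0m.monotoneOn ht hs0 (le_of_lt hs)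
    have hsetEq : Prod.mk s ⁻¹' C = Set.Iic (cumHaz lam0 t) ×ˢ (Set.univ : Set ℝ) := by
      ext q
      simp only [hC, Set.mem_preimage, Set.mem_setOf_eq, Set.mem_prod, Set.mem_Iic,
        Set.mem_univ, and_true, max_eq_left hs0]
      constructor
      · rintro (⟨_, h2⟩ | ⟨_, h2, _⟩)
        · exact h2
        · exact absurd h2 (not_le.2 hs)
      · intro h
        exact Or.inl ⟨h.trans h0ts, h⟩
    rw [hsetEq, Measure.prod_prod, measure_univ, mul_one, li_expIic (h0nn ht)]
  -- unfold the density
  rw [lintegral_withDensity_eq_lintegral_mul _ hrhom hfib_meas]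
  have hzero : ∀ s : ℝ, (rho * fun s => ((expMeasure 1).prod (expMeasure 1))
      (Prod.mk s ⁻¹' C)) s = Set.indicator (Set.Ioi (0:ℝ))
        (fun s => rho s * ((expMeasure 1).prod (expMeasure 1)) (Prod.mk s ⁻¹' C)) s := by
    intro s
    by_cases h : s ∈ Set.Ioi (0:ℝ)
    · rw [Set.indicator_of_mem h]
      rfl
    · rw [Set.indicator_of_notMem h]
      show rho s * _ = 0
      rw [hrho]
      dsimp only
      rw [Set.indicator_of_notMem h, zero_mul]
  rw [lintegral_congr hzero, lintegral_indicator measurableSet_Ioi,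
    ← Set.Ioc_union_Ioi_eq_Ioi ht,
    lintegral_union measurableSet_Ioi (Set.Ioc_disjoint_Ioi le_rfl)]
  -- piece over (0, t]
  set phim : ℝ → ℝ := fun s => lamS (max s 0) * Real.exp (-cumHaz lamS (max s 0)) *
      ((1 - Real.exp (-cumHaz lam0 (max s 0))) + Real.exp (-cumHaz lam0 (max s 0)) *
        (1 - Real.exp (-L1m s))) with hphim
  have hphim_meas : Measurable phim := by
    have e0 : Measurable (fun s : ℝ => Real.exp (-cumHaz lam0 (max s 0))) :=
      (Real.continuous_exp.comp hmax0.neg).measurable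
    have eS : Measurable (fun s : ℝ => lamS (max s 0) * Real.exp (-cumHaz lamS (max s 0))) :=
      (hmaxlamS.mul (Real.continuous_exp.comp hmaxS.neg)).measurable
    have e1 : Measurable (fun s : ℝ => Real.exp (-L1m s)) :=
      Real.measurable_exp.comp hL1meas.neg
    exact eS.mul ((measurable_const.sub e0).add (e0.mul (measurable_const.sub e1)))
  have hbd : ∀ s ∈ Set.Ioc (0:ℝ) t, 0 ≤ phim s ∧
      phim s ≤ 2 * (lamS (max s 0) * Real.exp (-cumHaz lamS (max s 0))) := by
    intro s hs
    have hs0 : (0:ℝ) ≤ s := hs.1.le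
    have hmx : max s 0 = s := max_eq_left hs0
    have hSn : 0 ≤ lamS s * Real.exp (-cumHaz lamS s) :=
      mul_nonneg (hSpos s hs0).le (Real.exp_nonneg _)
    have h01 : Real.exp (-cumHaz lam0 s) ≤ 1 := Real.exp_le_one_iff.2 (neg_nonpos.2 (h0nn hs0))
    have h0n : 0 ≤ Real.exp (-cumHaz lam0 s) := Real.exp_nonneg _
    have h11 : Real.exp (-L1m s) ≤ 1 := by
      rw [hL1eq s hs0 hs.2]
      exact Real.exp_le_one_iff.2 (neg_nonpos.2 (h1cumnn hs0 hs.2))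
    have h1n : 0 ≤ Real.exp (-L1m s) := Real.exp_nonneg _
    constructor
    · simp only [hphim, hmx]
      apply mul_nonneg hSn
      nlinarith [mul_nonneg h0n (sub_nonneg.2 h11)]
    · simp only [hphim, hmx]
      have hBle : Real.exp (-cumHaz lam0 s) * (1 - Real.exp (-L1m s)) ≤ 1 := by nlinarith
      have hBnn : 0 ≤ Real.exp (-cumHaz lam0 s) * (1 - Real.exp (-L1m s)) :=
        mul_nonneg h0n (by linarith)
      have hsum : (1 - Real.exp (-cumHaz lam0 s)) + Real.exp (-cumHaz lam0 s) *
          (1 - Real.exp (-L1m s)) ≤ 2 := by linarith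
      nlinarith [mul_le_mul_of_nonneg_left hsum hSn]
  have hIphi : IntegrableOn phim (Set.Ioc 0 t) volume := by
    apply Integrable.mono'
      (g := fun s => 2 * (lamS (max s 0) * Real.exp (-cumHaz lamS (max s 0))))
    · exact Continuous.integrableOn_Ioc
        (continuous_const.mul (hmaxlamS.mul (Real.continuous_exp.comp hmaxS.neg)))
    · exact hphim_meas.aestronglyMeasurable
    · refine (ae_restrict_iff' measurableSet_Ioc).2 (ae_of_all _ (fun s hs => ?_))
      rw [Real.norm_eq_abs, abs_of_nonneg (hbd s hs).1]
      exact (hbd s hs).2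
  have hpiece1 : ∫⁻ s in Set.Ioc (0:ℝ) t,
      rho s * ((expMeasure 1).prod (expMeasure 1)) (Prod.mk s ⁻¹' C)
      = ENNReal.ofReal (∫ s in (0:ℝ)..t, lamS s * Real.exp (-cumHaz lamS s) *
        ((1 - Real.exp (-cumHaz lam0 s)) + Real.exp (-cumHaz lam0 s) *
          (1 - Real.exp (-cumHaz1 lam1 t s)))) := by
    have e : ∀ s ∈ Set.Ioc (0:ℝ) t,
        rho s * ((expMeasure 1).prod (expMeasure 1)) (Prod.mk s ⁻¹' C)
        = ENNReal.ofReal (phim s) := by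
      intro s hs
      have hs0 : (0:ℝ) ≤ s := hs.1.le
      rw [hfib1 s hs, hrho]
      dsimp only
      rw [Set.indicator_of_mem (Set.mem_Ioi.2 hs.1)]
      rw [← ENNReal.ofReal_mul (mul_nonneg (by
        rw [max_eq_left hs0]; exact (hSpos s hs0).le) (Real.exp_nonneg _))]
      simp only [hphim]
      rw [max_eq_left hs0, hL1eq s hs0 hs.2]
    rw [setLIntegral_congr_fun measurableSet_Ioc (e),
      ← ofReal_integral_eq_lintegral_ofReal hIphi
        ((ae_restrict_iff' measurableSet_Ioc).2 (ae_of_all _ (fun s hs => (hbd s hs).1))),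
      ← intervalIntegral.integral_of_le ht]
    congr 1
    apply intervalIntegral.integral_congr
    intro s hs
    rw [uIcc_of_le ht] at hs
    simp only [hphim]
    rw [max_eq_left hs.1, hL1eq s hs.1 hs.2]
  -- piece over (t, ∞)
  haveI : IsProbabilityMeasure (P.map T1) := Measure.isProbabilityMeasure_map hT1m.aemeasurable
  have hrint : ∫⁻ s in Set.Ioi t, rho s = ENNReal.ofReal (Real.exp (-cumHaz lamS t)) := by
    have h1 : ∫⁻ s in Set.Ioi t, rho s = (volume.withDensity rho) (Set.Ioi t) :=
      (withDensity_apply _ measurableSet_Ioi).symm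
    rw [h1, ← hlaw1, ← Set.compl_Iic,
      measure_compl measurableSet_Iic (measure_ne_top _ _), measure_univ, hlaw1,
      hnuIic, if_pos ht, ← ENNReal.ofReal_one, ← ENNReal.ofReal_sub _ (by
        have := Real.exp_le_one_iff.2 (neg_nonpos.2 (hSnn ht))
        linarith)]
    norm_num
  have hpiece2 : ∫⁻ s in Set.Ioi t,
      rho s * ((expMeasure 1).prod (expMeasure 1)) (Prod.mk s ⁻¹' C)
      = ENNReal.ofReal (Real.exp (-cumHaz lamS t) * (1 - Real.exp (-cumHaz lam0 t))) := by
    have e2 : ∀ s ∈ Set.Ioi t,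
        rho s * ((expMeasure 1).prod (expMeasure 1)) (Prod.mk s ⁻¹' C)
        = rho s * ENNReal.ofReal (1 - Real.exp (-cumHaz lam0 t)) :=
      fun s hs => by rw [hfib2 s hs]
    rw [setLIntegral_congr_fun measurableSet_Ioi (e2),
      lintegral_mul_const _ hrhom, hrint,
      ← ENNReal.ofReal_mul (Real.exp_nonneg _)]
  -- assemble
  have hInn : 0 ≤ ∫ s in (0:ℝ)..t, lamS s * Real.exp (-cumHaz lamS s) *
      ((1 - Real.exp (-cumHaz lam0 s)) + Real.exp (-cumHaz lam0 s) *
        (1 - Real.exp (-cumHaz1 lam1 t s))) := by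
    apply intervalIntegral.integral_nonneg ht
    intro s hs
    have h01 : Real.exp (-cumHaz lam0 s) ≤ 1 :=
      Real.exp_le_one_iff.2 (neg_nonpos.2 (h0nn hs.1))
    have h11 : Real.exp (-cumHaz1 lam1 t s) ≤ 1 :=
      Real.exp_le_one_iff.2 (neg_nonpos.2 (h1cumnn hs.1 hs.2))
    have h0n : (0:ℝ) ≤ Real.exp (-cumHaz lam0 s) := Real.exp_nonneg _
    apply mul_nonneg (mul_nonneg (hSpos s hs.1).le (Real.exp_nonneg _))
    nlinarith
  have htailnn : 0 ≤ Real.exp (-cumHaz lamS t) * (1 - Real.exp (-cumHaz lam0 t)) := by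
    apply mul_nonneg (Real.exp_nonneg _)
    have := Real.exp_le_one_iff.2 (neg_nonpos.2 (h0nn ht))
    linarith
  have hIfin : IntervalIntegrable (fun s => lamS s * Real.exp (-cumHaz lamS s) *
      ((1 - Real.exp (-cumHaz lam0 s)) + Real.exp (-cumHaz lam0 s) *
        (1 - Real.exp (-cumHaz1 lam1 t s)))) volume 0 t := by
    rw [intervalIntegrable_iff_integrableOn_Ioc_of_le ht]
    apply hIphi.congr_fun _ measurableSet_Ioc
    intro s hs
    simp only [hphim]
    rw [max_eq_left hs.1.le, hL1eq s hs.1.le hs.2]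
  rw [hpiece1, hpiece2, ← ENNReal.ofReal_add hInn htailnn]
  exact congrArg ENNReal.ofReal (li_final lam1 hScont h0cont ht hIfin)
end
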